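/- arXiv:1707.02257 — 6 statements merged into one kernel-verified Lean document; each statement's English description precedes it below -/
import Mathlib

section
/- Let N ≥ 1 and let Φ_N(x,t) ∈ ℤ[x,t] be the N-th dynatomic polynomial. Then for every integer M ≥ 1, the identity Φ_N(f_t^M(x), t) = Φ_N(f_t^{M−1}(x), t) · Φ_N(−f_t^{M−1}(x), t) holds in ℤ[x,t]. Equivalently, the generalized dynatomic polynomial Φ_{M,N}(x,t), defined as the quotient Φ_N(f_t^M(x),t)/Φ_N(f_t^{M−1}(x),t), equals Φ_N(−f_t^{M−1}(x), t). -/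
noncomputable section

/-- The iterates `f_t^n(x)` of `f_t(x) = x² + t`, as polynomials in `x` over `ℤ[t]`
(so `fIter 0 = x` and `fIter (n+1) = (fIter n)² + t`). -/
def fIter : ℕ → Polynomial (Polynomial ℤ)
  | 0 => Polynomial.X
  | n + 1 => (fIter n) ^ 2 + Polynomial.C Polynomial.X

namespace Stmt4Aux

open Polynomial

lemma fIter_monic_deg : ∀ n, (fIter n).Monic ∧ (fIter n).natDegree = 2 ^ n := by
  intro n
  induction n with
  | zero => simpa [fIter] using monic_X
  | succ m ih =>
    obtain ⟨hm, hd⟩ := ih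
    have hsq : ((fIter m) ^ 2).Monic := hm.pow 2
    have hdsq : ((fIter m) ^ 2).natDegree = 2 ^ (m + 1) := by
      rw [natDegree_pow, hd]; ring
    constructor
    · show ((fIter m) ^ 2 + C X).Monic
      refine hsq.add_of_left (lt_of_le_of_lt degree_C_le ?_)
      rw [degree_eq_natDegree hsq.ne_zero, hdsq]
      exact_mod_cast pow_pos (by norm_num) (m + 1)
    · show ((fIter m) ^ 2 + C X).natDegree = 2 ^ (m + 1)
      rw [natDegree_add_C, hdsq]

lemma fIter_natDegree (n : ℕ) : (fIter n).natDegree = 2 ^ n := (fIter_monic_deg n).2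

lemma fIter_not_C (n : ℕ) (c : Polynomial ℤ) : fIter n ≠ C c := by
  intro h
  have h2 := fIter_natDegree n
  rw [h, natDegree_C] at h2
  exact (pow_pos (by norm_num : (0:ℕ) < 2) n).ne' h2.symm

lemma fIter_sub_X_ne_zero {n : ℕ} (hn : 1 ≤ n) : fIter n - X ≠ 0 := by
  intro h
  have h1 : fIter n = X := by linear_combination (norm := ring_nf) h
  have h2 := fIter_natDegree n
  rw [h1, natDegree_X] at h2
  have := Nat.one_lt_two_pow_iff.mpr (by omega : n ≠ 0)
  omega

lemma fIter_add_X_ne_zero {n : ℕ} (hn : 1 ≤ n) : fIter n + X ≠ 0 := by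
  intro h
  have h1 : fIter n = -X := by linear_combination (norm := ring_nf) h
  have h2 := fIter_natDegree n
  rw [h1, natDegree_neg, natDegree_X] at h2
  have := Nat.one_lt_two_pow_iff.mpr (by omega : n ≠ 0)
  omega

lemma fIter_comp_neg_sq : ∀ n, ((fIter n).comp (-X)) ^ 2 = (fIter n) ^ 2 := by
  intro n
  induction n with
  | zero => show ((fIter 0).comp (-X)) ^ 2 = (fIter 0) ^ 2; rw [show fIter 0 = X from rfl, X_comp]; ring
  | succ m ih =>
    have h : (fIter (m + 1)).comp (-X) = fIter (m + 1) := by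
      show ((fIter m) ^ 2 + C X).comp (-X) = (fIter m) ^ 2 + C X
      rw [add_comp, pow_comp, C_comp, ih]
    rw [h]

lemma fIter_comp_neg {n : ℕ} (hn : 1 ≤ n) : (fIter n).comp (-X) = fIter n := by
  obtain ⟨m, rfl⟩ := Nat.exists_eq_succ_of_ne_zero (by omega : n ≠ 0)
  show ((fIter m) ^ 2 + C X).comp (-X) = (fIter m) ^ 2 + C X
  rw [add_comp, pow_comp, C_comp, fIter_comp_neg_sq]

/-- `f` itself, as a polynomial. -/
def f : Polynomial (Polynomial ℤ) := X ^ 2 + C X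

lemma fIter_comp_f : ∀ n, (fIter n).comp f = fIter (n + 1) := by
  intro n
  induction n with
  | zero => simp [fIter, f]
  | succ m ih =>
    show ((fIter m) ^ 2 + C X).comp f = (fIter (m + 1)) ^ 2 + C X
    rw [add_comp, pow_comp, C_comp, ih]

lemma f_comp (p : Polynomial (Polynomial ℤ)) : f.comp p = p ^ 2 + C X := by
  simp [f, add_comp, pow_comp, C_comp, X_comp]

/-- Key factorization: `(f^n − X) ∘ f = (f^n − X) · ((f^n − X) ∘ (−X))` for `n ≥ 1`. -/
lemma key {n : ℕ} (hn : 1 ≤ n) :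
    (fIter n - X).comp f = (fIter n - X) * ((fIter n - X).comp (-X)) := by
  simp only [sub_comp, X_comp, fIter_comp_f, fIter_comp_neg hn]
  show (fIter n) ^ 2 + C X - (X ^ 2 + C X) = (fIter n - X) * (fIter n - -X)
  ring

theorem stmt4' (N : ℕ) (hN : 1 ≤ N) (PhiN : Polynomial (Polynomial ℤ))
    (hPhi : PhiN *
        ∏ n ∈ N.divisors.filter (fun n => ArithmeticFunction.moebius (N / n) = -1),
          (fIter n - Polynomial.X)
      = ∏ n ∈ N.divisors.filter (fun n => ArithmeticFunction.moebius (N / n) = 1),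
          (fIter n - Polynomial.X)) :
    PhiN.comp f = PhiN * PhiN.comp (-X) ∧ PhiN ≠ 0 := by
  set Sm := N.divisors.filter (fun n => ArithmeticFunction.moebius (N / n) = -1) with hSm
  set Sp := N.divisors.filter (fun n => ArithmeticFunction.moebius (N / n) = 1) with hSp
  have hmem : ∀ {n : ℕ} {s : Finset ℕ}, s ⊆ N.divisors → n ∈ s → 1 ≤ n := by
    intro n s hs hn
    exact Nat.pos_of_mem_divisors (hs hn)
  have hsubm : Sm ⊆ N.divisors := Finset.filter_subset _ _
  have hsubp : Sp ⊆ N.divisors := Finset.filter_subset _ _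
  have hA : ∀ (s : Finset ℕ), s ⊆ N.divisors →
      (∏ n ∈ s, (fIter n - X)).comp f
        = (∏ n ∈ s, (fIter n - X)) * (∏ n ∈ s, (fIter n - X)).comp (-X) := by
    intro s hs
    rw [prod_comp, prod_comp, ← Finset.prod_mul_distrib]
    exact Finset.prod_congr rfl fun n hn => key (hmem hs hn)
  have hne : ∀ (s : Finset ℕ), s ⊆ N.divisors →
      (∏ n ∈ s, (fIter n - X)) ≠ 0 :=
    fun s hs => Finset.prod_ne_zero_iff.mpr fun n hn => fIter_sub_X_ne_zero (hmem hs hn)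
  have hneC : ∀ (s : Finset ℕ), s ⊆ N.divisors →
      (∏ n ∈ s, (fIter n - X)).comp (-X) ≠ 0 := by
    intro s hs
    rw [prod_comp]
    refine Finset.prod_ne_zero_iff.mpr fun n hn => ?_
    rw [sub_comp, X_comp, fIter_comp_neg (hmem hs hn)]
    exact fun h => fIter_add_X_ne_zero (hmem hs hn) (by linear_combination (norm := ring_nf) h)
  have hPhine : PhiN ≠ 0 := by
    intro h
    rw [h, zero_mul] at hPhi
    exact hne Sp hsubp hPhi.symm
  refine ⟨?_, hPhine⟩
  have h1 : PhiN.comp f * (∏ n ∈ Sm, (fIter n - X)).comp f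
      = (∏ n ∈ Sp, (fIter n - X)).comp f := by
    rw [← mul_comp, hPhi]
  rw [hA Sm hsubm, hA Sp hsubp, ← hPhi, mul_comp] at h1
  have h2 : (PhiN.comp f) * ((∏ n ∈ Sm, (fIter n - X)) * (∏ n ∈ Sm, (fIter n - X)).comp (-X))
      = (PhiN * PhiN.comp (-X)) *
        ((∏ n ∈ Sm, (fIter n - X)) * (∏ n ∈ Sm, (fIter n - X)).comp (-X)) := by
    linear_combination h1
  exact mul_right_cancel₀ (mul_ne_zero (hne Sm hsubm) (hneC Sm hsubm)) h2

end Stmt4Aux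

/-- Let `Φ_N(x,t)` be the `N`-th dynatomic polynomial, i.e. the
(unique) polynomial satisfying
`Φ_N · ∏_{n ∣ N, μ(N/n) = −1} (f_t^n(x) − x) = ∏_{n ∣ N, μ(N/n) = 1} (f_t^n(x) − x)`.
Then for every `M ≥ 1`,
`Φ_N(f_t^M(x), t) = Φ_N(f_t^{M−1}(x), t) · Φ_N(−f_t^{M−1}(x), t)`;
equivalently, the generalized dynatomic polynomial `Φ_{M,N}` — the (unique) polynomial
with `Φ_{M,N} · Φ_N(f_t^{M−1}(x), t) = Φ_N(f_t^M(x), t)` — equals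
`Φ_N(−f_t^{M−1}(x), t)`. -/
theorem stmt4 (N : ℕ) (hN : 1 ≤ N) (PhiN : Polynomial (Polynomial ℤ))
    (hPhi : PhiN *
        ∏ n ∈ N.divisors.filter (fun n => ArithmeticFunction.moebius (N / n) = -1),
          (fIter n - Polynomial.X)
      = ∏ n ∈ N.divisors.filter (fun n => ArithmeticFunction.moebius (N / n) = 1),
          (fIter n - Polynomial.X))
    (M : ℕ) (hM : 1 ≤ M) :
    PhiN.comp (fIter M) = PhiN.comp (fIter (M - 1)) * PhiN.comp (-(fIter (M - 1))) ∧
    ∀ PhiMN : Polynomial (Polynomial ℤ),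
      PhiMN * PhiN.comp (fIter (M - 1)) = PhiN.comp (fIter M) →
      PhiMN = PhiN.comp (-(fIter (M - 1))) := by
  obtain ⟨hkey, hPhine⟩ := Stmt4Aux.stmt4' N hN PhiN hPhi
  obtain ⟨m, rfl⟩ := Nat.exists_eq_succ_of_ne_zero (by omega : M ≠ 0)
  simp only [Nat.succ_sub_one]
  have hfit : fIter (m + 1) = Stmt4Aux.f.comp (fIter m) := by
    rw [Stmt4Aux.f_comp]; rfl
  have hmain : PhiN.comp (fIter (m + 1))
      = PhiN.comp (fIter m) * PhiN.comp (-(fIter m)) := by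
    rw [hfit, ← Polynomial.comp_assoc, hkey, Polynomial.mul_comp, Polynomial.comp_assoc,
      Polynomial.neg_comp, Polynomial.X_comp]
  refine ⟨hmain, fun PhiMN h => ?_⟩
  have hcompne : PhiN.comp (fIter m) ≠ 0 := by
    rw [Ne, Polynomial.comp_eq_zero_iff]
    push_neg
    exact ⟨hPhine, fun _ => Stmt4Aux.fIter_not_C m _⟩
  rw [hmain] at h
  exact mul_right_cancel₀ hcompne (by linear_combination h)
end
end

section
/- Let K be a field of characteristic zero, c ∈ K, and let M ≥ 1 and N ≥ 1 be integers. A point α ∈ K has preperiod exactly M and eventual period exactly N under f_c (i.e., preperiodic portrait (M,N)) if and only if the point β := −f_c^{M−1}(α) has exact period N under f_c and β ≠ f_c^{M−1}(α) (equivalently, f_c^{M−1}(α) ≠ 0). -/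
noncomputable section

/-- Let `K` be a field of characteristic zero, `c ∈ K`,
`f = f_c(z) = z² + c`, and `M, N ≥ 1`.  A point `α ∈ K` has preperiodic portrait
`(M, N)` for `f_c` (preperiod exactly `M` and eventual period exactly `N`) if and only
if `β := −f_c^{M−1}(α)` has exact period `N` under `f_c` and `β ≠ f_c^{M−1}(α)`. -/
theorem stmt5 (K : Type) [Field K] [CharZero K] (c : K) (M N : ℕ)
    (hM : 1 ≤ M) (hN : 1 ≤ N) (α : K)
    (f : K → K) (hf : ∀ z, f z = z ^ 2 + c) :
    (f^[M + N] α = f^[M] α ∧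
      (∀ n, 0 < n → n < N → f^[M + n] α ≠ f^[M] α) ∧
      (∀ m, m < M → ¬ ∃ n, 0 < n ∧ f^[m + n] α = f^[m] α))
    ↔ (f^[N] (-(f^[M - 1] α)) = -(f^[M - 1] α) ∧
      (∀ n, 0 < n → n < N → f^[n] (-(f^[M - 1] α)) ≠ -(f^[M - 1] α)) ∧
      -(f^[M - 1] α) ≠ f^[M - 1] α) := by
  set γ := f^[M - 1] α with hγdef
  have hfe : ∀ z : K, f (-z) = f z := by intro z; rw [hf, hf]; ring
  have hsq : ∀ x y : K, f x = f y → x = y ∨ x = -y := by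
    intro x y h
    rw [hf, hf] at h
    have h0 : (x - y) * (x + y) = 0 := by linear_combination h
    rcases mul_eq_zero.1 h0 with h' | h'
    · left; exact sub_eq_zero.mp h'
    · right; exact eq_neg_of_add_eq_zero_left h'
  have hM1 : M - 1 + 1 = M := by omega
  have hfγ : f γ = f^[M] α := by
    conv_rhs => rw [← hM1, Function.iterate_succ_apply']
  have horb : ∀ n, f^[n + 1] (-γ) = f^[M + n] α := by
    intro n
    rw [Function.iterate_succ_apply, hfe, hfγ, ← Function.iterate_add_apply]
    congr 1; omega
  have horb' : ∀ n, 1 ≤ n → f^[n] (-γ) = f^[M - 1 + n] α := by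
    intro n hn
    obtain ⟨j, rfl⟩ : ∃ j, n = j + 1 := ⟨n - 1, by omega⟩
    rw [horb]; congr 1; omega
  have hneg : ∀ n, 1 ≤ n → f^[n] γ = f^[n] (-γ) := by
    intro n hn
    obtain ⟨j, rfl⟩ : ∃ j, n = j + 1 := ⟨n - 1, by omega⟩
    rw [Function.iterate_succ_apply, Function.iterate_succ_apply, hfe]
  have hidx : ∀ n, f^[n] γ = f^[M - 1 + n] α := by
    intro n
    rw [hγdef, ← Function.iterate_add_apply]; congr 1; omega
  constructor
  · rintro ⟨h1, h2, h3⟩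
    have e1 : f^[N] (-γ) = f^[M - 1 + N] α := horb' N hN
    have e2 : f (f^[M - 1 + N] α) = f γ := by
      rw [← Function.iterate_succ_apply' f, hfγ]
      have : (M - 1 + N).succ = M + N := by omega
      rw [this]; exact h1
    have hper : f^[N] (-γ) = -γ := by
      rcases hsq _ _ e2 with hcase | hcase
      · exact absurd ⟨N, hN, hcase⟩ (h3 (M - 1) (by omega))
      · rw [e1, hcase]
    refine ⟨hper, ?_, ?_⟩
    · intro n hn hnN heq
      have e3 : f^[n] (-γ) = f^[M - 1 + n] α := horb' n hn
      have : f^[M + n] α = f^[M] α := by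
        have := congrArg f heq
        rw [e3, ← Function.iterate_succ_apply' f, hfe, hfγ] at this
        have hi : (M - 1 + n).succ = M + n := by omega
        rwa [hi] at this
      exact h2 n hn hnN this
    · intro heq
      apply h3 (M - 1) (by omega)
      refine ⟨N, hN, ?_⟩
      have := hper
      rw [e1, heq] at this
      exact this
  · rintro ⟨h1, h2, h3⟩
    have e1 : f^[M - 1 + N] α = -γ := by rw [← horb' N hN, h1]
    have gA : f^[M + N] α = f^[M] α := by
      have : f (f^[M - 1 + N] α) = f γ := by rw [e1, hfe]
      rw [← Function.iterate_succ_apply' f, hfγ] at this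
      have hi : (M - 1 + N).succ = M + N := by omega
      rwa [hi] at this
    have noγ : ∀ n, f^[n] (-γ) ≠ γ := by
      intro n
      induction n using Nat.strong_induction_on with
      | _ n ih =>
        intro hb
        rcases Nat.lt_or_ge n N with hlt | hge
        · rcases Nat.eq_zero_or_pos n with h0 | h0
          · subst h0; simp only [Function.iterate_zero_apply] at hb; exact h3 hb
          · have hnn : f^[N - n] (-γ) = -γ := by
              calc f^[N - n] (-γ) = f^[N - n] γ := (hneg _ (by omega)).symm
                _ = f^[N - n] (f^[n] (-γ)) := by rw [hb]
                _ = f^[N] (-γ) := by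
                    rw [← Function.iterate_add_apply]; congr 1; omega
                _ = -γ := h1
            exact h2 (N - n) (by omega) (by omega) hnn
        · apply ih (n - N) (by omega)
          have hsplit : f^[n] (-γ) = f^[n - N] (f^[N] (-γ)) := by
            rw [← Function.iterate_add_apply]; congr 1; omega
          rw [h1] at hsplit
          rw [← hsplit]; exact hb
    refine ⟨gA, ?_, ?_⟩
    · intro n hn hnN heq
      have e3 : f^[n] (-γ) = f^[M - 1 + n] α := horb' n hn
      have e4 : f (f^[M - 1 + n] α) = f γ := by
        rw [← Function.iterate_succ_apply' f, hfγ]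
        have hi : (M - 1 + n).succ = M + n := by omega
        rw [hi]; exact heq
      rcases hsq _ _ e4 with hcase | hcase
      · exact noγ n (by rw [e3]; exact hcase)
      · exact h2 n hn hnN (by rw [e3]; exact hcase)
    · rintro m hm ⟨n, hn, heq⟩
      have e : f^[M - 1 - m] (f^[m + n] α) = f^[M - 1 - m] (f^[m] α) := by rw [heq]
      rw [← Function.iterate_add_apply, ← Function.iterate_add_apply] at e
      have i1 : M - 1 - m + (m + n) = M - 1 + n := by omega
      have i2 : M - 1 - m + m = M - 1 := by omega
      rw [i1, i2] at e
      apply noγ n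
      rw [← hneg n hn, hidx n, e]
end
end

section
/- Let K be a number field and c ∈ K. Then: (1) the graph G(f_c,K) is admissible — that is, every β ∈ PrePer(f_c,K) has either 0 or 2 preimages α ∈ K with α² + c = β, and for each N ≥ 2 the number of α ∈ K of exact period N under f_c is at most D(N) — if and only if 0 is not preperiodic for f_c; (2) G(f_c,K) is strongly admissible — admissible and, in addition, f_c has either 0 or 2 fixed points in K — if and only if 0 is not preperiodic for f_c and c ≠ 1/4. -/
noncomputable section

/-- `DD N = Σ_{n ∣ N} μ(N/n)·2^n`. -/
def DD (N : ℕ) : ℤ := ∑ n ∈ N.divisors, ArithmeticFunction.moebius (N / n) * 2 ^ n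

namespace Stmt7Aux

open Polynomial Function

variable {L : Type*} [Field L]

/-- the `n`-fold composition of `X^2 + c` with itself. -/
def Fit (c : L) : ℕ → L[X]
  | 0 => X
  | n + 1 => (X ^ 2 + C c).comp (Fit c n)

lemma Fit_zero (c : L) : Fit c 0 = X := rfl

lemma Fit_succ (c : L) (n : ℕ) : Fit c (n + 1) = (X ^ 2 + C c).comp (Fit c n) := rfl

lemma Fit_add (c : L) (a b : ℕ) : Fit c (a + b) = (Fit c a).comp (Fit c b) := by
  induction a with
  | zero => simp [Fit_zero]
  | succ a ih =>
      have h : a + 1 + b = (a + b) + 1 := by ring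
      rw [h, Fit_succ, ih, Fit_succ, Polynomial.comp_assoc]

lemma eval_Fit (c : L) (n : ℕ) (x : L) :
    eval x (Fit c n) = (fun z : L => z ^ 2 + c)^[n] x := by
  induction n with
  | zero => simp [Fit_zero]
  | succ n ih =>
      rw [Fit_succ, eval_comp, ih, Function.iterate_succ_apply']
      simp

lemma natDegree_Fit (c : L) (n : ℕ) : (Fit c n).natDegree = 2 ^ n := by
  induction n with
  | zero => simp [Fit_zero]
  | succ n ih =>
      rw [Fit_succ, natDegree_comp, ih, natDegree_X_pow_add_C, pow_succ]
      ring

lemma Fit_sub_X_ne_zero (c : L) {n : ℕ} (hn : n ≠ 0) : Fit c n - X ≠ 0 := by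
  intro h
  have h2 : (Fit c n).natDegree = 2 ^ n := natDegree_Fit c n
  rw [sub_eq_zero.mp h, natDegree_X] at h2
  exact absurd h2.symm (Nat.one_lt_two_pow hn).ne'

lemma eval_Fit_fixed {c α : L} {e : ℕ} (h : eval α (Fit c e) = α) (k : ℕ) :
    eval α (Fit c (e * k)) = α := by
  induction k with
  | zero => simp [Fit_zero]
  | succ k ih =>
      have h1 : e * (k + 1) = e * k + e := by ring
      rw [h1, Fit_add, eval_comp, h, ih]

lemma eval_deriv_Fit_pow {c α : L} {e : ℕ} (h : eval α (Fit c e) = α) (k : ℕ) :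
    eval α (derivative (Fit c (e * k))) = (eval α (derivative (Fit c e))) ^ k := by
  induction k with
  | zero => simp [Fit_zero]
  | succ k ih =>
      have h1 : e * (k + 1) = e * k + e := by ring
      rw [h1, Fit_add, derivative_comp, eval_mul, eval_comp, h, ih, pow_succ]
      ring

lemma rootMult_eq_one {p : L[X]} {α : L} (h0 : p.eval α = 0)
    (h1 : p.derivative.eval α ≠ 0) : rootMultiplicity α p = 1 := by
  have hp : p ≠ 0 := by rintro rfl; simp at h1
  have hle : 0 < rootMultiplicity α p := (rootMultiplicity_pos hp).mpr h0
  by_contra hne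
  have h2 : 2 ≤ rootMultiplicity α p := by omega
  have hdvd : (X - C α) ^ 2 ∣ p :=
    dvd_trans (pow_dvd_pow _ h2) (pow_rootMultiplicity_dvd p α)
  obtain ⟨t, ht⟩ := hdvd
  apply h1
  rw [ht, derivative_mul, derivative_pow, derivative_X_sub_C]
  simp


lemma multIter [CharZero L] (c : L) (α : L) (e j : ℕ) (he : e ≠ 0) (hj : j ≠ 0)
    (hroot : eval α (Fit c e) = α) (hder : eval α (derivative (Fit c e)) = 1) :
    rootMultiplicity α (Fit c (e * j) - X) = rootMultiplicity α (Fit c e - X) := by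
  set p := Fit c e - X with hp
  have hp0 : p ≠ 0 := Fit_sub_X_ne_zero c he
  set m := rootMultiplicity α p with hm
  set q := p /ₘ (X - C α) ^ m with hqdef
  have hq : (X - C α) ^ m * q = p := pow_mul_divByMonic_rootMultiplicity_eq p α
  have hqα : eval α q ≠ 0 := eval_divByMonic_pow_rootMultiplicity_ne_zero α hp0
  -- telescoping identity
  have tele : ∀ J : ℕ, Fit c (e * J) - X = ∑ i ∈ Finset.range J, p.comp (Fit c (e * i)) := by
    intro J
    induction J with
    | zero => simp [Fit_zero]
    | succ J ih =>
        rw [Finset.sum_range_succ, ← ih]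
        have h1 : e * (J + 1) = e + e * J := by ring
        rw [h1, Fit_add, hp, sub_comp, X_comp]
        ring
  -- the factors
  set w : ℕ → L[X] := fun i => (Fit c (e * i) - C α) /ₘ (X - C α) with hwdef
  have hwi : ∀ i : ℕ, (X - C α) * w i = Fit c (e * i) - C α := by
    intro i
    refine mul_divByMonic_eq_iff_isRoot.mpr ?_
    simp [IsRoot, eval_Fit_fixed hroot i]
  have hwα : ∀ i : ℕ, eval α (w i) = 1 := by
    intro i
    have hd := congrArg derivative (hwi i)
    rw [derivative_mul, derivative_X_sub_C, derivative_sub, derivative_C, sub_zero] at hd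
    have := congrArg (Polynomial.eval α) hd
    simpa [eval_Fit_fixed hroot i, eval_deriv_Fit_pow hroot i, hder] using this
  have hcomp : ∀ i : ℕ, p.comp (Fit c (e * i)) =
      (X - C α) ^ m * ((w i) ^ m * q.comp (Fit c (e * i))) := by
    intro i
    conv_lhs => rw [← hq]
    rw [mul_comp, pow_comp, sub_comp, X_comp, C_comp, ← hwi i, mul_pow]
    ring
  set S := ∑ i ∈ Finset.range j, ((w i) ^ m * q.comp (Fit c (e * i))) with hSdef
  have hGS : Fit c (e * j) - X = (X - C α) ^ m * S := by
    rw [tele j, hSdef, Finset.mul_sum]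
    exact Finset.sum_congr rfl fun i _ => hcomp i
  have hSα : eval α S = (j : L) * eval α q := by
    rw [hSdef, eval_finset_sum]
    have : ∀ i ∈ Finset.range j, eval α ((w i) ^ m * q.comp (Fit c (e * i))) = eval α q := by
      intro i _
      rw [eval_mul, eval_pow, hwα i, eval_comp, eval_Fit_fixed hroot i, one_pow, one_mul]
    rw [Finset.sum_congr rfl this, Finset.sum_const, Finset.card_range, nsmul_eq_mul]
  have hSα0 : eval α S ≠ 0 := by
    rw [hSα]
    exact mul_ne_zero (Nat.cast_ne_zero.mpr hj) hqα
  have hS0 : S ≠ 0 := fun h => hSα0 (by rw [h]; simp)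
  rw [hGS, rootMultiplicity_mul (mul_ne_zero (pow_ne_zero _ (X_sub_C_ne_zero α)) hS0),
    rootMultiplicity_X_sub_C_pow, rootMultiplicity_eq_zero (by simpa [IsRoot] using hSα0),
    add_zero]


lemma sum_divisors_shift {M d : ℕ} (hd0 : d ≠ 0) (hdM : d ∣ M) (g : ℕ → ℤ)
    (hg : ∀ n ∈ M.divisors, ¬ d ∣ n → g n = 0) :
    ∑ n ∈ M.divisors, g n = ∑ t ∈ (M / d).divisors, g (d * t) := by
  rw [← Finset.sum_filter_of_ne (p := fun n => d ∣ n)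
    (fun n hn h => by by_contra hdn; exact h (hg n hn hdn))]
  refine Finset.sum_nbij' (fun n => n / d) (fun t => d * t) ?_ ?_ ?_ ?_ ?_
  · intro n hn
    rw [Finset.mem_filter, Nat.mem_divisors] at hn
    obtain ⟨⟨hnM, hM0⟩, a, rfl⟩ := hn
    rw [Nat.mem_divisors]
    constructor
    · have h1 : d * a ∣ d * (M / d) := by rwa [Nat.mul_div_cancel' hdM]
      show d * a / d ∣ M / d
      rw [Nat.mul_div_cancel_left a (Nat.pos_of_ne_zero hd0)]
      exact (mul_dvd_mul_iff_left hd0).mp h1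
    · intro h0
      have := Nat.mul_div_cancel' hdM
      rw [h0, mul_zero] at this
      exact hM0 this.symm
  · intro t ht
    rw [Nat.mem_divisors] at ht
    rw [Finset.mem_filter, Nat.mem_divisors]
    refine ⟨⟨?_, ?_⟩, Dvd.intro t rfl⟩
    · exact (Nat.mul_div_cancel' hdM) ▸ mul_dvd_mul_left d ht.1
    · intro h; exact ht.2 (by rw [h]; simp)
  · intro n hn
    rw [Finset.mem_filter] at hn
    show d * (n / d) = n
    exact Nat.mul_div_cancel' hn.2
  · intro t _
    show d * t / d = t
    exact Nat.mul_div_cancel_left t (Nat.pos_of_ne_zero hd0)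
  · intro n hn
    rw [Finset.mem_filter] at hn
    show g n = g (d * (n / d))
    rw [Nat.mul_div_cancel' hn.2]

lemma sum_divisors_moebius (M : ℕ) :
    ∑ t ∈ M.divisors, (ArithmeticFunction.moebius (M / t) : ℤ)
      = if M = 1 then 1 else 0 := by
  rw [Nat.sum_div_divisors M (fun t => (ArithmeticFunction.moebius t : ℤ))]
  have h := ArithmeticFunction.coe_mul_zeta_apply
    (f := (ArithmeticFunction.moebius : ArithmeticFunction ℤ)) (x := M)
  rw [ArithmeticFunction.moebius_mul_coe_zeta] at h
  rw [← h, ArithmeticFunction.one_apply]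


lemma key [CharZero L] (c : L) (N : ℕ) (hN : N ≠ 0) (α : L)
    (hα : (fun z : L => z ^ 2 + c)^[N] α = α) :
    (if minimalPeriod (fun z : L => z ^ 2 + c) α = N then (1 : ℤ) else 0) ≤
      ∑ n ∈ N.divisors, (ArithmeticFunction.moebius (N / n) : ℤ) *
        (rootMultiplicity α (Fit c n - X) : ℤ) := by
  set φ := fun z : L => z ^ 2 + c with hφ
  have hper : IsPeriodicPt φ N α := hα
  set d := minimalPeriod φ α with hdd
  have hd0 : d ≠ 0 := (hper.minimalPeriod_pos (Nat.pos_of_ne_zero hN)).ne'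
  have hdN : d ∣ N := hper.minimalPeriod_dvd
  have hFd : eval α (Fit c d) = α := by
    rw [eval_Fit]; exact isPeriodicPt_minimalPeriod φ α
  set lam := eval α (derivative (Fit c d)) with hlam
  set r := orderOf lam with hr
  set mm : ℤ := (rootMultiplicity α (Fit c (d * r) - X) : ℤ) with hmm
  -- multiplicities at multiples of d
  have hmul : ∀ k : ℕ, k ≠ 0 → ((rootMultiplicity α (Fit c (d * k) - X) : ℤ)) =
      if r ∣ k then mm else 1 := by
    intro k hk
    by_cases hrk : r ∣ k
    · rw [if_pos hrk, hmm]
      norm_cast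
      have hr0 : r ≠ 0 := by
        rintro h; rw [h] at hrk; exact hk (zero_dvd_iff.mp hrk)
      obtain ⟨j, rfl⟩ := hrk
      have hj : j ≠ 0 := by rintro rfl; exact hk (mul_zero r)
      have h1 : d * (r * j) = (d * r) * j := by ring
      rw [h1]
      exact multIter c α (d * r) j (mul_ne_zero hd0 hr0) hj
        (eval_Fit_fixed hFd r)
        (by rw [eval_deriv_Fit_pow hFd r]; exact pow_orderOf_eq_one lam)
    · rw [if_neg hrk]
      have hlamk : lam ^ k ≠ 1 := fun h => hrk (orderOf_dvd_iff_pow_eq_one.mpr h)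
      norm_cast
      apply rootMult_eq_one
      · rw [eval_sub, eval_X, eval_Fit_fixed hFd k, sub_self]
      · rw [derivative_sub, derivative_X, eval_sub, eval_one, eval_deriv_Fit_pow hFd k]
        exact sub_ne_zero.mpr hlamk
  -- terms vanish off multiples of d
  have hvan : ∀ n ∈ N.divisors, ¬ d ∣ n →
      (ArithmeticFunction.moebius (N / n) : ℤ) *
        (rootMultiplicity α (Fit c n - X) : ℤ) = 0 := by
    intro n hn hdn
    have hmz : rootMultiplicity α (Fit c n - X) = 0 := by
      apply rootMultiplicity_eq_zero
      intro hroot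
      have heval : eval α (Fit c n) = α := by
        have h' : eval α (Fit c n - X) = 0 := hroot
        rw [eval_sub, eval_X, sub_eq_zero] at h'
        exact h'
      rw [eval_Fit] at heval
      have hper' : IsPeriodicPt φ n α := heval
      exact hdn hper'.minimalPeriod_dvd
    rw [hmz]; simp
  set M := N / d with hM
  have hdM : d * M = N := Nat.mul_div_cancel' hdN
  have hM0 : M ≠ 0 := by
    intro h; rw [h, mul_zero] at hdM; exact hN hdM.symm
  rw [sum_divisors_shift hd0 hdN _ hvan]
  have hsimp : ∀ t ∈ M.divisors,
      (ArithmeticFunction.moebius (N / (d * t)) : ℤ) *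
        (rootMultiplicity α (Fit c (d * t) - X) : ℤ)
      = (ArithmeticFunction.moebius (M / t) : ℤ) * 1
        + (ArithmeticFunction.moebius (M / t) : ℤ) *
          (if r ∣ t then mm - 1 else 0) := by
    intro t ht
    have ht0 : t ≠ 0 := (Nat.pos_of_mem_divisors ht).ne'
    rw [← Nat.div_div_eq_div_mul, ← hM, hmul t ht0]
    by_cases hrt : r ∣ t
    · rw [if_pos hrt, if_pos hrt]; ring
    · rw [if_neg hrt, if_neg hrt]; ring
  rw [Finset.sum_congr rfl hsimp, Finset.sum_add_distrib]
  have hfirst : ∑ t ∈ M.divisors, (ArithmeticFunction.moebius (M / t) : ℤ) * 1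
      = if M = 1 then 1 else 0 := by
    simp only [mul_one]
    exact sum_divisors_moebius M
  have hsecond : ∑ t ∈ M.divisors, (ArithmeticFunction.moebius (M / t) : ℤ) *
      (if r ∣ t then mm - 1 else 0) = if r = M then mm - 1 else 0 := by
    by_cases hrM : r ∣ M ∧ r ≠ 0
    · rw [sum_divisors_shift hrM.2 hrM.1 _ (fun t _ hrt => by rw [if_neg hrt, mul_zero])]
      have hc : ∀ s ∈ (M / r).divisors,
          (ArithmeticFunction.moebius (M / (r * s)) : ℤ) *
            (if r ∣ r * s then mm - 1 else 0)
          = (mm - 1) * (ArithmeticFunction.moebius ((M / r) / s) : ℤ) := by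
        intro s _
        rw [if_pos (dvd_mul_right r s), ← Nat.div_div_eq_div_mul, mul_comm]
      rw [Finset.sum_congr rfl hc, ← Finset.mul_sum, sum_divisors_moebius]
      have hiff : M / r = 1 ↔ r = M := by
        constructor
        · intro h
          have h2 := Nat.mul_div_cancel' hrM.1
          rw [h, mul_one] at h2
          exact h2
        · intro h
          rw [← h]
          exact Nat.div_self (Nat.pos_of_ne_zero hrM.2)
      by_cases h : r = M
      · rw [if_pos (hiff.mpr h), if_pos h, mul_one]
      · rw [if_neg (fun hh => h (hiff.mp hh)), if_neg h, mul_zero]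
    · have hR : ¬ (r = M) := by
        intro h
        exact hrM ⟨h ▸ dvd_refl r, by rw [h]; exact hM0⟩
      rw [if_neg hR]
      apply Finset.sum_eq_zero
      intro t ht
      have ht0 : t ≠ 0 := (Nat.pos_of_mem_divisors ht).ne'
      have : ¬ r ∣ t := by
        intro hrt
        exact hrM ⟨hrt.trans (Nat.dvd_of_mem_divisors ht), fun h => ht0 (by
          rw [h] at hrt; exact zero_dvd_iff.mp hrt)⟩
      rw [if_neg this, mul_zero]
  rw [hfirst, hsecond]
  have hdN_iff : d = N ↔ M = 1 := by
    constructor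
    · intro h
      rw [hM, h]
      exact Nat.div_self (Nat.pos_of_ne_zero hN)
    · intro h
      rw [h, mul_one] at hdM
      exact hdM
  have hmm1 : r = M → 1 ≤ mm := by
    intro h2
    have hdr : d * r = N := by rw [h2]; exact hdM
    have hroot : IsRoot (Fit c (d * r) - X) α := by
      show eval α (Fit c (d * r) - X) = 0
      rw [eval_sub, eval_X, hdr, eval_Fit]
      have : φ^[N] α = α := hα
      rw [this, sub_self]
    have hpos := (rootMultiplicity_pos
      (Fit_sub_X_ne_zero c (by rw [hdr]; exact hN))).mpr hroot
    rw [hmm]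
    exact_mod_cast hpos
  by_cases h1 : M = 1
  · rw [if_pos (hdN_iff.mpr h1)]
    rw [if_pos h1]
    by_cases h2 : r = M
    · rw [if_pos h2]
      have := hmm1 h2
      linarith
    · rw [if_neg h2]; norm_num
  · rw [if_neg (fun h => h1 (hdN_iff.mp h)), if_neg h1]
    by_cases h2 : r = M
    · rw [if_pos h2]
      have := hmm1 h2
      linarith
    · rw [if_neg h2]; norm_num



lemma countBound {L : Type*} [Field L] [IsAlgClosed L] [CharZero L] [DecidableEq L] (c : L) (N : ℕ)
    (hN : N ≠ 0) :
    ((((Fit c N - X).roots.toFinset.filter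
        (fun α => minimalPeriod (fun z : L => z ^ 2 + c) α = N)).card : ℤ)) ≤ DD N := by
  classical
  set G : ℕ → L[X] := fun n => Fit c n - X with hG
  set S := (G N).roots.toFinset with hS
  have hGne : ∀ n : ℕ, n ≠ 0 → G n ≠ 0 := fun n hn => Fit_sub_X_ne_zero c hn
  have hmemS : ∀ α : L, α ∈ S ↔ (fun z : L => z ^ 2 + c)^[N] α = α := by
    intro α
    rw [hS, Multiset.mem_toFinset, mem_roots (hGne N hN), IsRoot, hG]
    simp only [eval_sub, eval_X, sub_eq_zero]
    rw [eval_Fit]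
  -- total multiplicity of G n over S equals 2^n
  have step : ∀ n ∈ N.divisors, ∑ α ∈ S, (rootMultiplicity α (G n) : ℤ) = 2 ^ n := by
    intro n hn
    obtain ⟨hnN, hN0⟩ := Nat.mem_divisors.mp hn
    have hn0 : n ≠ 0 := (Nat.pos_of_mem_divisors hn).ne'
    have hsub : (G n).roots.toFinset ⊆ S := by
      intro α hα
      rw [Multiset.mem_toFinset, mem_roots (hGne n hn0)] at hα
      rw [hmemS]
      have heval : eval α (Fit c n) = α := by
        have h' : eval α (Fit c n - X) = 0 := hα
        rw [eval_sub, eval_X, sub_eq_zero] at h'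
        exact h'
      rw [eval_Fit] at heval
      have hper : IsPeriodicPt (fun z : L => z ^ 2 + c) n α := heval
      exact (hper.trans_dvd hnN)
    have h1 : ∑ α ∈ (G n).roots.toFinset, (rootMultiplicity α (G n) : ℤ)
        = ((G n).roots.card : ℤ) := by
      rw [← Nat.cast_sum]
      norm_cast
      rw [← Multiset.toFinset_sum_count_eq (G n).roots]
      exact Finset.sum_congr rfl fun α _ => (count_roots (G n)).symm ▸ rfl
    have h2 : ∑ α ∈ S, (rootMultiplicity α (G n) : ℤ)
        = ∑ α ∈ (G n).roots.toFinset, (rootMultiplicity α (G n) : ℤ) := by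
      symm
      apply Finset.sum_subset hsub
      intro α _ hα
      have : ¬ IsRoot (G n) α := by
        intro hr
        exact hα (Multiset.mem_toFinset.mpr ((mem_roots (hGne n hn0)).mpr hr))
      rw [rootMultiplicity_eq_zero this, Nat.cast_zero]
    have h3 : (G n).roots.card = (G n).natDegree :=
      splits_iff_card_roots.mp (IsAlgClosed.splits (G n))
    have h4 : (G n).natDegree = 2 ^ n := by
      show (Fit c n - X).natDegree = 2 ^ n
      rw [natDegree_sub_eq_left_of_natDegree_lt]
      · exact natDegree_Fit c n
      · rw [natDegree_X, natDegree_Fit c n]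
        exact Nat.one_lt_two_pow hn0
    rw [h2, h1, h3, h4]
    norm_cast
  -- assemble
  have hcard : ((S.filter (fun α => minimalPeriod (fun z : L => z ^ 2 + c) α = N)).card : ℤ)
      = ∑ α ∈ S, (if minimalPeriod (fun z : L => z ^ 2 + c) α = N then (1 : ℤ) else 0) := by
    rw [Finset.card_filter]
    push_cast
    rfl
  rw [hcard]
  have hle : ∑ α ∈ S, (if minimalPeriod (fun z : L => z ^ 2 + c) α = N then (1 : ℤ) else 0)
      ≤ ∑ α ∈ S, ∑ n ∈ N.divisors, (ArithmeticFunction.moebius (N / n) : ℤ) *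
          (rootMultiplicity α (Fit c n - X) : ℤ) := by
    apply Finset.sum_le_sum
    intro α hα
    exact key c N hN α ((hmemS α).mp hα)
  refine hle.trans ?_
  rw [Finset.sum_comm]
  have : ∀ n ∈ N.divisors, ∑ α ∈ S, (ArithmeticFunction.moebius (N / n) : ℤ) *
      (rootMultiplicity α (Fit c n - X) : ℤ)
      = (ArithmeticFunction.moebius (N / n) : ℤ) * 2 ^ n := by
    intro n hn
    rw [← Finset.mul_sum]
    have hs := step n hn
    rw [hG] at hs
    rw [hs]
  rw [Finset.sum_congr rfl this]
  exact le_of_eq rfl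


lemma periodBound {K : Type*} [Field K] [CharZero K] (c : K) (f : K → K)
    (hf : ∀ z, f z = z ^ 2 + c) (N : ℕ) (hN : N ≠ 0) :
    {α : K | f^[N] α = α ∧ ∀ k, 0 < k → k < N → f^[k] α ≠ α}.encard
      ≤ ((DD N).toNat : ℕ∞) := by
  classical
  have hfe : f = fun z : K => z ^ 2 + c := funext hf
  subst hfe
  set L := AlgebraicClosure K
  letI : DecidableEq L := Classical.decEq L
  have hinj : Function.Injective (algebraMap K L) := (algebraMap K L).injective
  haveI : CharZero L := charZero_of_injective_algebraMap hinj
  set ι := algebraMap K L with hι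
  set c' := ι c with hc'
  set φ := fun z : L => z ^ 2 + c' with hφ
  set fK := fun z : K => z ^ 2 + c with hfK
  have hcomm : ∀ (n : ℕ) (x : K), ι (fK^[n] x) = φ^[n] (ι x) := by
    intro n
    induction n with
    | zero => intro x; simp
    | succ n ih =>
        intro x
        rw [Function.iterate_succ_apply', Function.iterate_succ_apply']
        show ι ((fK^[n] x) ^ 2 + c) = (φ^[n] (ι x)) ^ 2 + c'
        rw [map_add, map_pow, ih x, hc']
  set T := ((Fit c' N - X).roots.toFinset.filter (fun α => minimalPeriod φ α = N)) with hT
  set s := {α : K | fK^[N] α = α ∧ ∀ k, 0 < k → k < N → fK^[k] α ≠ α} with hs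
  have himg : ι '' s ⊆ (↑T : Set L) := by
    rintro _ ⟨α, hα, rfl⟩
    obtain ⟨hα1, hα2⟩ := hα
    have hper : IsPeriodicPt φ N (ι α) := by
      show φ^[N] (ι α) = ι α
      rw [← hcomm, hα1]
    rw [Finset.coe_filter]
    constructor
    · rw [Multiset.mem_toFinset, mem_roots (Fit_sub_X_ne_zero c' hN)]
      show eval (ι α) (Fit c' N - X) = 0
      rw [eval_sub, eval_X, eval_Fit]
      have : φ^[N] (ι α) = ι α := hper
      rw [this, sub_self]
    · have hd0 : 0 < minimalPeriod φ (ι α) :=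
        hper.minimalPeriod_pos (Nat.pos_of_ne_zero hN)
      have hdle : minimalPeriod φ (ι α) ≤ N :=
        Nat.le_of_dvd (Nat.pos_of_ne_zero hN) hper.minimalPeriod_dvd
      rcases lt_or_eq_of_le hdle with hlt | heq
      · exfalso
        have hfix : fK^[minimalPeriod φ (ι α)] α = α := by
          apply hinj
          rw [hcomm]
          exact isPeriodicPt_minimalPeriod φ (ι α)
        exact hα2 _ hd0 hlt hfix
      · exact heq
  have hcardle : T.card ≤ (DD N).toNat := by
    have h1 : ((T.card : ℤ)) ≤ DD N := countBound c' N hN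
    have h2 := Int.toNat_le_toNat h1
    simpa using h2
  calc s.encard = (ι '' s).encard := (Set.InjOn.encard_image (hinj.injOn)).symm
    _ ≤ (↑T : Set L).encard := Set.encard_le_encard himg
    _ = (T.card : ℕ∞) := Set.encard_coe_eq_coe_finsetCard T
    _ ≤ ((DD N).toNat : ℕ∞) := Nat.cast_le.mpr hcardle


variable {K : Type*} [Field K] [CharZero K]

lemma preimage_encard (c β : K) (hβc : β ≠ c) :
    {α : K | α ^ 2 + c = β}.encard = 0 ∨ {α : K | α ^ 2 + c = β}.encard = 2 := by
  by_cases h : ∃ s : K, s ^ 2 = β - c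
  · right
    obtain ⟨s, hs⟩ := h
    have hs0 : s ≠ 0 := by
      rintro rfl
      apply hβc
      have : (0 : K) = β - c := by rw [← hs]; ring
      linear_combination -this
    have hset : {α : K | α ^ 2 + c = β} = {s, -s} := by
      ext α
      simp only [Set.mem_setOf_eq, Set.mem_insert_iff, Set.mem_singleton_iff]
      constructor
      · intro hα
        have h2 : (α - s) * (α + s) = 0 := by linear_combination hα - hs
        rcases mul_eq_zero.mp h2 with h3 | h3
        · left; linear_combination h3
        · right; linear_combination h3
      · rintro (rfl | rfl)
        · linear_combination hs
        · linear_combination hs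
    rw [hset]
    refine Set.encard_pair ?_
    intro hcon
    apply hs0
    have h2 : s + s = 0 := by linear_combination hcon
    have h3 : (2 : K) * s = 0 := by linear_combination h2
    rcases mul_eq_zero.mp h3 with h4 | h4
    · exact absurd h4 two_ne_zero
    · exact h4
  · left
    rw [Set.encard_eq_zero]
    rw [Set.eq_empty_iff_forall_notMem]
    intro α hα
    simp only [Set.mem_setOf_eq] at hα
    exact h ⟨α, by linear_combination hα⟩

lemma fixed_encard (c : K) (hc : c ≠ 1 / 4) :
    {α : K | α ^ 2 + c = α}.encard = 0 ∨ {α : K | α ^ 2 + c = α}.encard = 2 := by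
  have h4 : (4 : K) ≠ 0 := by norm_num
  have h2 : (2 : K) ≠ 0 := two_ne_zero
  have hd : (1 : K) - 4 * c ≠ 0 := by
    intro h
    apply hc
    field_simp
    linear_combination -h
  by_cases h : ∃ s : K, s ^ 2 = 1 - 4 * c
  · right
    obtain ⟨s, hs⟩ := h
    have hs0 : s ≠ 0 := by
      rintro rfl
      exact hd (by linear_combination -hs)
    have hset : {α : K | α ^ 2 + c = α} = {(1 + s) / 2, (1 - s) / 2} := by
      ext α
      simp only [Set.mem_setOf_eq, Set.mem_insert_iff, Set.mem_singleton_iff]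
      constructor
      · intro hα
        have hfac : (2 * α - 1 - s) * (2 * α - 1 + s) = 0 := by
          linear_combination 4 * hα - hs
        rcases mul_eq_zero.mp hfac with h3 | h3
        · left
          rw [eq_div_iff h2]
          linear_combination h3
        · right
          rw [eq_div_iff h2]
          linear_combination h3
      · rintro (rfl | rfl)
        · have expand : ((1 + s) / 2) ^ 2 + c - (1 + s) / 2
              = (s ^ 2 - (1 - 4 * c)) / 4 := by ring
          have hz : ((1 + s) / 2) ^ 2 + c - (1 + s) / 2 = 0 := by
            rw [expand, hs]; simp
          linear_combination hz
        · have expand : ((1 - s) / 2) ^ 2 + c - (1 - s) / 2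
              = (s ^ 2 - (1 - 4 * c)) / 4 := by ring
          have hz : ((1 - s) / 2) ^ 2 + c - (1 - s) / 2 = 0 := by
            rw [expand, hs]; simp
          linear_combination hz
    rw [hset]
    refine Set.encard_pair ?_
    intro hcon
    apply hs0
    rw [div_eq_div_iff h2 h2] at hcon
    have : (2 : K) * s = 0 := by linear_combination hcon / 2
    rcases mul_eq_zero.mp this with h5 | h5
    · exact absurd h5 h2
    · exact h5
  · left
    rw [Set.encard_eq_zero, Set.eq_empty_iff_forall_notMem]
    intro α hα
    simp only [Set.mem_setOf_eq] at hα
    exact h ⟨2 * α - 1, by linear_combination 4 * hα⟩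

lemma fixed_quarter :
    {α : K | α ^ 2 + 1 / 4 = α} = {(1 / 2 : K)} := by
  have h2 : (2 : K) ≠ 0 := two_ne_zero
  ext α
  simp only [Set.mem_setOf_eq, Set.mem_singleton_iff]
  constructor
  · intro hα
    have hsq : (α - 1 / 2) ^ 2 = 0 := by
      linear_combination hα
    have := pow_eq_zero_iff (n := 2) (by norm_num) |>.mp hsq
    linear_combination this
  · rintro rfl
    norm_num


end Stmt7Aux

/-- Let `K` be a number field and `c ∈ K`, `f = f_c(z) = z² + c`.
(1) The graph `G(f_c, K)` is admissible — every `K`-rational preperiodic point has `0`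
or `2` `K`-rational preimages, and for every `N ≥ 2` there are at most `D(N)` points of
exact period `N` in `K` — if and only if `0` is not preperiodic for `f_c`.
(2) `G(f_c, K)` is strongly admissible — admissible, and `f_c` has `0` or `2` fixed
points in `K` — if and only if `0` is not preperiodic for `f_c` and `c ≠ 1/4`. -/
theorem stmt7 (K : Type) [Field K] [NumberField K] (c : K)
    (f : K → K) (hf : ∀ z, f z = z ^ 2 + c) :
    (((∀ β : K, (∃ m n : ℕ, m < n ∧ f^[m] β = f^[n] β) →
        ({α : K | f α = β}.encard = 0 ∨ {α : K | f α = β}.encard = 2)) ∧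
      (∀ N : ℕ, 2 ≤ N →
        {α : K | f^[N] α = α ∧ ∀ k, 0 < k → k < N → f^[k] α ≠ α}.encard
          ≤ ((DD N).toNat : ℕ∞)))
      ↔ ¬ (∃ m n : ℕ, m < n ∧ f^[m] (0 : K) = f^[n] (0 : K))) ∧
    (((∀ β : K, (∃ m n : ℕ, m < n ∧ f^[m] β = f^[n] β) →
        ({α : K | f α = β}.encard = 0 ∨ {α : K | f α = β}.encard = 2)) ∧
      (∀ N : ℕ, 2 ≤ N →
        {α : K | f^[N] α = α ∧ ∀ k, 0 < k → k < N → f^[k] α ≠ α}.encard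
          ≤ ((DD N).toNat : ℕ∞)) ∧
      ({α : K | f α = α}.encard = 0 ∨ {α : K | f α = α}.encard = 2))
      ↔ (¬ (∃ m n : ℕ, m < n ∧ f^[m] (0 : K) = f^[n] (0 : K)) ∧ c ≠ 1 / 4)) := by
  have hf0 : f 0 = c := by rw [hf]; simp
  -- the period bound, valid unconditionally
  have hB : ∀ N : ℕ, 2 ≤ N →
      {α : K | f^[N] α = α ∧ ∀ k, 0 < k → k < N → f^[k] α ≠ α}.encard
        ≤ ((DD N).toNat : ℕ∞) := by
    intro N hN
    exact Stmt7Aux.periodBound c f hf N (by omega)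
  -- admissible preimage condition from non-preperiodicity of 0
  have hA_of : ¬ (∃ m n : ℕ, m < n ∧ f^[m] (0 : K) = f^[n] (0 : K)) →
      ∀ β : K, (∃ m n : ℕ, m < n ∧ f^[m] β = f^[n] β) →
        ({α : K | f α = β}.encard = 0 ∨ {α : K | f α = β}.encard = 2) := by
    intro hz β hβ
    have hβc : β ≠ c := by
      rintro rfl
      apply hz
      obtain ⟨m, n, hmn, h⟩ := hβ
      refine ⟨m + 1, n + 1, by omega, ?_⟩
      rw [Function.iterate_succ_apply, Function.iterate_succ_apply, hf0, h]
    have hset : {α : K | f α = β} = {α : K | α ^ 2 + c = β} := by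
      ext α; simp [hf]
    rw [hset]
    exact Stmt7Aux.preimage_encard c β hβc
  -- conversely, admissibility forces 0 to be non-preperiodic
  have hofA : (∀ β : K, (∃ m n : ℕ, m < n ∧ f^[m] β = f^[n] β) →
      ({α : K | f α = β}.encard = 0 ∨ {α : K | f α = β}.encard = 2)) →
      ¬ (∃ m n : ℕ, m < n ∧ f^[m] (0 : K) = f^[n] (0 : K)) := by
    intro hA hz
    obtain ⟨m, n, hmn, h⟩ := hz
    have hcp : ∃ m n : ℕ, m < n ∧ f^[m] c = f^[n] c := by
      refine ⟨m, n, hmn, ?_⟩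
      calc f^[m] c = f^[m] (f 0) := by rw [hf0]
        _ = f^[m + 1] 0 := (Function.iterate_succ_apply f m 0).symm
        _ = f (f^[m] 0) := Function.iterate_succ_apply' f m 0
        _ = f (f^[n] 0) := by rw [h]
        _ = f^[n + 1] 0 := (Function.iterate_succ_apply' f n 0).symm
        _ = f^[n] (f 0) := Function.iterate_succ_apply f n 0
        _ = f^[n] c := by rw [hf0]
    have hset0 : {α : K | f α = c} = {(0 : K)} := by
      ext α
      simp only [Set.mem_setOf_eq, Set.mem_singleton_iff, hf]
      constructor
      · intro hα
        have h2 : α ^ 2 = 0 := by linear_combination hα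
        exact pow_eq_zero_iff (by norm_num) |>.mp h2
      · rintro rfl; simp
    have h1 : ({(0 : K)} : Set K).encard = 1 := Set.encard_singleton 0
    rcases hA c hcp with h0 | h2
    · rw [hset0, h1] at h0
      exact one_ne_zero h0
    · rw [hset0, h1] at h2
      have : (1 : ℕ∞) ≠ 2 := by decide
      exact this h2
  constructor
  · constructor
    · rintro ⟨hA, _⟩
      exact hofA hA
    · intro hz
      exact ⟨hA_of hz, hB⟩
  · constructor
    · rintro ⟨hA, _, hC⟩
      refine ⟨hofA hA, ?_⟩
      rintro rfl
      have hset : {α : K | f α = α} = {(1 / 2 : K)} := by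
        have : {α : K | f α = α} = {α : K | α ^ 2 + 1 / 4 = α} := by
          ext α; simp [hf]
        rw [this]
        exact Stmt7Aux.fixed_quarter
      have h1 : ({(1 / 2 : K)} : Set K).encard = 1 := Set.encard_singleton _
      rcases hC with h0 | h2
      · rw [hset, h1] at h0
        exact one_ne_zero h0
      · rw [hset, h1] at h2
        have : (1 : ℕ∞) ≠ 2 := by decide
        exact this h2
    · rintro ⟨hz, hc⟩
      refine ⟨hA_of hz, hB, ?_⟩
      have hset : {α : K | f α = α} = {α : K | α ^ 2 + c = α} := by
        ext α; simp [hf]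
      rw [hset]
      exact Stmt7Aux.fixed_encard c hc
end
end

section
/- Let K be a number field. Then the set of c ∈ K for which G(f_c,K) is not strongly admissible is finite. Explicitly, the set of c ∈ K such that [some β ∈ PrePer(f_c,K) has exactly one preimage α ∈ K with α² + c = β, or for some N ≥ 2 the number of α ∈ K of exact period N under f_c exceeds D(N), or the number of fixed points of f_c in K is exactly 1] is a finite subset of K. -/
noncomputable section

namespace St8
open Polynomial Finset

open Polynomial

variable {L : Type*} [Field L]

/-- the polynomial giving the n-th iterate of z^2 + c -/
def itp (c : L) : ℕ → L[X]
  | 0 => X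
  | n+1 => (itp c n).comp (X ^ 2 + C c)

@[simp] lemma itp_zero (c : L) : itp c 0 = X := rfl
lemma itp_succ (c : L) (n : ℕ) : itp c (n+1) = (itp c n).comp (X ^ 2 + C c) := rfl

lemma itp_eval (c : L) (n : ℕ) (x : L) :
    (itp c n).eval x = (fun z : L => z ^ 2 + c)^[n] x := by
  induction n generalizing x with
  | zero => simp
  | succ n ih =>
      rw [itp_succ, eval_comp, Function.iterate_succ_apply]
      simp only [eval_add, eval_pow, eval_X, eval_C]
      exact ih _


lemma itp_monic (c : L) (n : ℕ) : (itp c n).Monic := by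
  induction n with
  | zero => simp [monic_X]
  | succ n ih =>
      rw [itp_succ]
      exact ih.comp (monic_X_pow_add_C c (by norm_num)) (by simp [natDegree_X_pow_add_C])

lemma itp_natDegree (c : L) (n : ℕ) : (itp c n).natDegree = 2 ^ n := by
  induction n with
  | zero => simp
  | succ n ih =>
      rw [itp_succ, natDegree_comp, ih, natDegree_X_pow_add_C, pow_succ]

lemma itp_comm (c : L) (n : ℕ) :
    (itp c n).comp (X ^ 2 + C c) = (X ^ 2 + C c).comp (itp c n) := by
  induction n with
  | zero => simp
  | succ n ih =>
      rw [itp_succ]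
      conv_lhs => rw [ih]
      rw [comp_assoc]

lemma itp_add (c : L) (a b : ℕ) : itp c (a + b) = (itp c b).comp (itp c a) := by
  induction b with
  | zero => simp
  | succ b ih =>
      rw [← Nat.add_assoc, itp_succ, itp_succ, ih, comp_assoc, itp_comm, ← comp_assoc]

/-- composition power of a polynomial -/
def cpow (p : L[X]) : ℕ → L[X]
  | 0 => X
  | k+1 => p.comp (cpow p k)

lemma itp_mul (c : L) (m k : ℕ) : itp c (m * k) = cpow (itp c m) k := by
  induction k with
  | zero => simp [cpow]
  | succ k ih => rw [Nat.mul_succ, itp_add, ih, cpow]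

lemma cpow_eval_fixed {p : L[X]} {α : L} (hp : p.eval α = α) (k : ℕ) :
    (cpow p k).eval α = α := by
  induction k with
  | zero => simp [cpow]
  | succ k ih => rw [cpow, eval_comp, ih, hp]

lemma cpow_deriv {p : L[X]} {α : L} (hp : p.eval α = α) (k : ℕ) :
    (derivative (cpow p k)).eval α = ((derivative p).eval α) ^ k := by
  induction k with
  | zero => simp [cpow]
  | succ k ih =>
      rw [cpow, derivative_comp, eval_mul, eval_comp, cpow_eval_fixed hp, ih, pow_succ]

lemma rm_factor {α : L} {u : L[X]} (s : ℕ) (hu : u.eval α ≠ 0) :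
    rootMultiplicity α ((X - C α) ^ s * u) = s := by
  have hu0 : u ≠ 0 := fun h => hu (by simp [h])
  rw [rootMultiplicity_mul (mul_ne_zero (pow_ne_zero _ (X_sub_C_ne_zero α)) hu0),
    rootMultiplicity_X_sub_C_pow, rootMultiplicity_eq_zero hu, add_zero]

lemma rm_pos {p : L[X]} {α : L} (hfix : p.eval α = α) (hne : p - X ≠ 0) :
    1 ≤ rootMultiplicity α (p - X) :=
  (rootMultiplicity_pos hne).mpr (by simp [IsRoot, hfix])

lemma rm_one {p : L[X]} {α : L} (hfix : p.eval α = α)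
    (hl : (derivative p).eval α ≠ 1) : rootMultiplicity α (p - X) = 1 := by
  have hne : p - X ≠ 0 := by
    intro h
    have : p = X := by linear_combination (norm := ring_nf) h
    rw [this] at hl; simp at hl
  obtain ⟨u, hpu, hnd⟩ := (p - X).exists_eq_pow_rootMultiplicity_mul_and_not_dvd hne α
  have hu : u.eval α ≠ 0 := fun h => hnd (dvd_iff_isRoot.mpr h)
  set s := rootMultiplicity α (p - X) with hs
  have h1 : 1 ≤ s := rm_pos hfix hne
  rcases Nat.lt_or_ge s 2 with h | h
  · omega
  · exfalso
    have hd : (derivative (p - X)).eval α = (derivative p).eval α - 1 := by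
      rw [derivative_sub, derivative_X]; simp
    have : (derivative ((X - C α) ^ s * u)).eval α = 0 := by
      rw [derivative_mul, derivative_pow]
      have h2 : (2:ℕ) ≤ s := h
      have e1 : ((X - C α) ^ (s-1)).eval α = 0 := by
        rw [eval_pow]; simp [sub_self]
        omega
      simp only [eval_add, eval_mul, eval_pow, eval_sub, eval_X, eval_C, sub_self]
      rw [zero_pow (by omega), zero_pow (by omega)]
      ring
    rw [← hpu, hd] at this
    exact hl (sub_eq_zero.mp this)

lemma rm_cpow [CharZero L] {p : L[X]} {α : L} (hfix : p.eval α = α)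
    (hl : (derivative p).eval α = 1) (hne : p - X ≠ 0) {k : ℕ} (hk : k ≠ 0) :
    rootMultiplicity α (cpow p k - X) = rootMultiplicity α (p - X) := by
  obtain ⟨u, hpu, hnd⟩ := (p - X).exists_eq_pow_rootMultiplicity_mul_and_not_dvd hne α
  have hu : u.eval α ≠ 0 := fun h => hnd (dvd_iff_isRoot.mpr h)
  set s := rootMultiplicity α (p - X) with hs
  have h1 : 1 ≤ s := rm_pos hfix hne
  have h2 : 2 ≤ s := by
    rcases Nat.lt_or_ge s 2 with h | h
    · exfalso
      have hs1 : s = 1 := by omega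
      rw [hs1, pow_one] at hpu
      have : (derivative (p - X)).eval α = u.eval α := by
        rw [hpu, derivative_mul]
        simp [derivative_sub]
      rw [derivative_sub, derivative_X] at this
      simp [hl] at this
      exact hu this.symm
    · exact h
  have key : ∀ k : ℕ, ∃ w : L[X], cpow p k - X = (X - C α) ^ s * w ∧
      w.eval α = (k : L) * u.eval α := by
    intro k
    induction k with
    | zero => exact ⟨0, by simp [cpow], by simp⟩
    | succ k ih =>
        obtain ⟨w, hw, hwe⟩ := ih
        have hsplit : cpow p (k+1) - X = (p - X).comp (cpow p k) + (cpow p k - X) := by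
          rw [show cpow p (k+1) = p.comp (cpow p k) from rfl, sub_comp, X_comp]
          ring
        have hsm : (X - C α) ^ s = (X - C α) ^ (s - 1) * (X - C α) := by
          rw [← pow_succ]
          congr 1
          omega
        have hfac : cpow p k - C α = (X - C α) * ((X - C α) ^ (s-1) * w + 1) := by
          have : cpow p k - C α = (cpow p k - X) + (X - C α) := by ring
          rw [this, hw, hsm]
          ring
        refine ⟨((X - C α) ^ (s-1) * w + 1) ^ s * u.comp (cpow p k) + w, ?_, ?_⟩
        · rw [hsplit, hpu, mul_comp, pow_comp, sub_comp, X_comp, C_comp, hfac, mul_pow, hw]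
          ring
        · have e0 : ((X - C α) ^ (s-1)).eval α = 0 := by
            rw [eval_pow]
            simp only [eval_sub, eval_X, eval_C, sub_self]
            exact zero_pow (by omega)
          simp only [eval_add, eval_mul, eval_pow, e0, zero_mul, zero_add, one_pow,
            eval_comp, cpow_eval_fixed hfix, eval_one, hwe]
          push_cast
          ring
  obtain ⟨w, hw, hwe⟩ := key k
  rw [hw, rm_factor s (by rw [hwe]; exact mul_ne_zero (Nat.cast_ne_zero.mpr hk) hu)]

open ArithmeticFunction Finset

lemma sum_moebius_div (M : ℕ) :
    ∑ e ∈ M.divisors, (moebius (M / e) : ℤ) = if M = 1 then 1 else 0 := by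
  rw [Nat.sum_div_divisors]
  have h := ArithmeticFunction.coe_mul_zeta_apply
    (f := (moebius : ArithmeticFunction ℤ)) (x := M)
  rw [ArithmeticFunction.moebius_mul_coe_zeta] at h
  rw [show (Nat.divisors M).sum ⇑moebius = ∑ i ∈ M.divisors, moebius i from rfl, ← h,
    ArithmeticFunction.one_apply]

lemma sum_moebius_mult (N d : ℕ) (hN : N ≠ 0) (hd : d ≠ 0) :
    ∑ n ∈ N.divisors.filter (d ∣ ·), (ArithmeticFunction.moebius (N / n) : ℤ)
      = if d = N then 1 else 0 := by
  by_cases hdN : d ∣ N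
  · have hNd0 : N / d ≠ 0 := by
      have := Nat.le_of_dvd (Nat.pos_of_ne_zero hN) hdN
      have := Nat.div_pos this (Nat.pos_of_ne_zero hd)
      omega
    rw [Finset.sum_nbij' (s := N.divisors.filter (d ∣ ·)) (t := (N / d).divisors)
      (f := fun n => (ArithmeticFunction.moebius (N / n) : ℤ))
      (g := fun e => (ArithmeticFunction.moebius ((N / d) / e) : ℤ))
      (fun n => n / d) (fun e => d * e) ?_ ?_ ?_ ?_ ?_]
    · rw [sum_moebius_div (N / d)]
      have : N / d = 1 ↔ d = N := by
        constructor
        · intro h1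
          have := Nat.div_mul_cancel hdN
          rw [h1, one_mul] at this
          exact this
        · intro h1; subst h1; exact Nat.div_self (Nat.pos_of_ne_zero hN)
      simp [this]
    · intro n hn
      simp only [mem_filter, Nat.mem_divisors] at hn
      obtain ⟨⟨hnN, _⟩, hdn⟩ := hn
      refine Nat.mem_divisors.mpr ⟨?_, hNd0⟩
      obtain ⟨a, rfl⟩ := hdn
      obtain ⟨m, hm⟩ := hnN
      subst hm
      show d * a / d ∣ d * a * m / d
      rw [mul_assoc d a m, Nat.mul_div_cancel_left _ (Nat.pos_of_ne_zero hd),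
        Nat.mul_div_cancel_left _ (Nat.pos_of_ne_zero hd)]
      exact Dvd.intro m rfl
    · intro e he
      rw [Nat.mem_divisors] at he
      simp only [mem_filter, Nat.mem_divisors]
      exact ⟨⟨Dvd.dvd.trans (mul_dvd_mul_left d he.1) (by rw [Nat.mul_div_cancel' hdN]), hN⟩,
        Dvd.intro e rfl⟩
    · intro n hn
      simp only [mem_filter] at hn
      exact Nat.mul_div_cancel' hn.2
    · intro e he
      exact Nat.mul_div_cancel_left e (Nat.pos_of_ne_zero hd)
    · intro n hn
      simp only [mem_filter] at hn
      show (ArithmeticFunction.moebius (N / n) : ℤ) = ArithmeticFunction.moebius (N / d / (n / d))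
      rw [Nat.div_div_eq_div_mul, Nat.mul_div_cancel' hn.2]
  · have h1 : N.divisors.filter (d ∣ ·) = ∅ := by
      rw [Finset.filter_eq_empty_iff]
      intro n hn hdn
      exact hdN (hdn.trans (Nat.mem_divisors.mp hn).1)
    rw [h1]
    have : d ≠ N := fun h => hdN (h ▸ dvd_refl N)
    simp [this]


lemma map_iter {K L' : Type*} [Field K] [Field L'] (φ : K →+* L') (c x : K) (k : ℕ) :
    φ ((fun z : K => z ^ 2 + c)^[k] x) = (fun z : L' => z ^ 2 + φ c)^[k] (φ x) := by
  induction k generalizing x with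
  | zero => rfl
  | succ k ih =>
      rw [Function.iterate_succ_apply', Function.iterate_succ_apply', ← ih]
      simp

def intp : ℕ → Polynomial ℤ
  | 0 => X
  | n+1 => intp n ^ 2 + X

lemma intp_aeval {K : Type*} [Field K] (c : K) (n : ℕ) :
    Polynomial.aeval c (intp n) = (fun z : K => z ^ 2 + c)^[n] c := by
  induction n with
  | zero => simp [intp]
  | succ n ih =>
      rw [show intp (n+1) = intp n ^ 2 + X from rfl, map_add, map_pow, ih, aeval_X,
        Function.iterate_succ_apply']

lemma intp_monic (n : ℕ) : (intp n).Monic ∧ (intp n).natDegree = 2 ^ n := by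
  induction n with
  | zero => exact ⟨monic_X, by simp [intp]⟩
  | succ n ih =>
      obtain ⟨hm, hd⟩ := ih
      have hsq : ((intp n) ^ 2).Monic := hm.pow 2
      have hdsq : ((intp n) ^ 2).natDegree = 2 ^ (n+1) := by
        rw [hm.natDegree_pow, hd, pow_succ, mul_comm]
      have hlt : (X : Polynomial ℤ).natDegree < ((intp n) ^ 2).natDegree := by
        rw [natDegree_X, hdsq]
        have : (2:ℕ) ≤ 2 ^ (n+1) := le_self_pow₀ (by norm_num) (by omega)
        omega
      constructor
      · refine hsq.add_of_left ?_
        exact degree_lt_degree hlt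
      · rw [show intp (n+1) = intp n ^ 2 + X from rfl,
          show (intp n) ^ 2 + X = (intp n) ^ 2 - (-X) by ring,
          natDegree_sub_eq_left_of_natDegree_lt (by rwa [natDegree_neg]), hdsq]

lemma complex_bound (w : ℂ) {m n : ℕ} (hmn : m < n)
    (h : (fun z : ℂ => z ^ 2 + w)^[m] w = (fun z : ℂ => z ^ 2 + w)^[n] w) : ‖w‖ ≤ 2 := by
  by_contra hw
  push_neg at hw
  set f : ℂ → ℂ := fun z => z ^ 2 + w with hf
  set δ : ℝ := ‖w‖ - 2 with hδ
  have hδ0 : 0 < δ := by rw [hδ]; linarith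
  have grow : ∀ k : ℕ, ‖w‖ + k * δ ≤ ‖f^[k] w‖ := by
    intro k
    induction k with
    | zero => simp
    | succ k ih =>
        have hk0 : (0:ℝ) ≤ (k:ℝ) * δ := by positivity
        have hz : 2 < ‖f^[k] w‖ := by linarith
        rw [Function.iterate_succ_apply', hf]
        have h1 : ‖(f^[k] w) ^ 2‖ ≤ ‖(f^[k] w) ^ 2 + w‖ + ‖w‖ := by
          calc ‖(f^[k] w) ^ 2‖ = ‖((f^[k] w) ^ 2 + w) + (-w)‖ := by ring_nf
            _ ≤ ‖(f^[k] w) ^ 2 + w‖ + ‖(-w)‖ := norm_add_le _ _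
            _ = ‖(f^[k] w) ^ 2 + w‖ + ‖w‖ := by rw [norm_neg]
        rw [norm_pow] at h1
        push_cast
        nlinarith [ih, sq_nonneg (‖f^[k] w‖ - ‖w‖), sq_nonneg ((k:ℝ) * δ)]
  have per : ∀ t : ℕ, f^[m + t * (n - m)] w = f^[m] w := by
    intro t
    induction t with
    | zero => simp
    | succ t ih =>
        have he : m + (t+1) * (n - m) = (n - m) + (m + t * (n - m)) := by ring
        rw [he, Function.iterate_add_apply, ih, ← Function.iterate_add_apply,
          show (n - m) + m = n from by omega]
        exact h.symm
  obtain ⟨t, ht⟩ := exists_nat_gt ((‖f^[m] w‖ - ‖w‖) / δ)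
  have hkt : (t:ℝ) ≤ ((m + t * (n - m) : ℕ) : ℝ) := by
    have h1 : t ≤ m + t * (n - m) := by
      calc t = t * 1 := (mul_one t).symm
        _ ≤ t * (n - m) := Nat.mul_le_mul_left t (by omega)
        _ ≤ m + t * (n - m) := Nat.le_add_left _ _
    exact_mod_cast h1
  have hg := grow (m + t * (n - m))
  rw [per t] at hg
  have ht2 : ‖f^[m] w‖ - ‖w‖ < t * δ := by
    rw [div_lt_iff₀ hδ0] at ht
    linarith
  nlinarith [mul_le_mul_of_nonneg_right hkt (le_of_lt hδ0)]

theorem preper_finite (K : Type) [Field K] [NumberField K] :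
    {c : K | ∃ m n : ℕ, m < n ∧
      (fun z : K => z ^ 2 + c)^[m] c = (fun z : K => z ^ 2 + c)^[n] c}.Finite := by
  refine Set.Finite.subset (NumberField.Embeddings.finite_of_norm_le K ℂ 2) ?_
  rintro c ⟨m, n, hmn, hc⟩
  have hmon : (intp n - intp m).Monic := by
    refine (intp_monic n).1.add_of_left ?_
    rw [degree_neg]
    apply degree_lt_degree
    rw [(intp_monic n).2, (intp_monic m).2]
    exact Nat.pow_lt_pow_right (by norm_num) hmn
  constructor
  · refine ⟨intp n - intp m, hmon, ?_⟩
    rw [← aeval_def, map_sub, intp_aeval, intp_aeval, hc, sub_self]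
  · intro φ
    refine complex_bound (φ c) hmn ?_
    rw [← map_iter φ, ← map_iter φ, hc]

lemma fixed_unique {K : Type} [Field K] [CharZero K] {c : K}
    (h : {α : K | α ^ 2 + c = α}.encard = 1) : c = 1/4 := by
  obtain ⟨a, ha⟩ := Set.encard_eq_one.mp h
  have h1 : a ∈ {α : K | α ^ 2 + c = α} := by rw [ha]; rfl
  simp only [Set.mem_setOf_eq] at h1
  have h2 : (1 - a) ∈ {α : K | α ^ 2 + c = α} := by
    simp only [Set.mem_setOf_eq]
    linear_combination h1
  rw [ha, Set.mem_singleton_iff] at h2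
  linear_combination h1 + ((2*a - 1)/4) * h2

lemma preimage_unique {K : Type} [Field K] [CharZero K] {c β : K}
    (h : {α : K | α ^ 2 + c = β}.encard = 1) : β = c := by
  obtain ⟨a, ha⟩ := Set.encard_eq_one.mp h
  have h1 : a ∈ {α : K | α ^ 2 + c = β} := by rw [ha]; rfl
  simp only [Set.mem_setOf_eq] at h1
  have h2 : (-a) ∈ {α : K | α ^ 2 + c = β} := by
    simp only [Set.mem_setOf_eq]
    linear_combination h1
  rw [ha, Set.mem_singleton_iff] at h2
  have ha0 : a = 0 := by linear_combination -h2/2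
  rw [← h1, ha0]
  ring

variable {L : Type*} [Field L]

theorem core [IsAlgClosed L] [CharZero L] (c : L) (N : ℕ) (hN : 1 ≤ N) :
    ∃ F : Finset L,
      {α : L | (fun z : L => z ^ 2 + c)^[N] α = α ∧
        ∀ k, 0 < k → k < N → (fun z : L => z ^ 2 + c)^[k] α ≠ α} ⊆ ↑F ∧
      (F.card : ℤ) ≤ DD N := by
  classical
  set f : L → L := fun z => z ^ 2 + c with hf
  set P : ℕ → L[X] := fun n => itp c n - X with hP
  have hPne : ∀ n, 1 ≤ n → P n ≠ 0 := by
    intro n hn h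
    have h2 : itp c n = X := sub_eq_zero.mp h
    have := itp_natDegree c n
    rw [h2, natDegree_X] at this
    have : 2 ≤ 2 ^ n := le_self_pow₀ (by norm_num) (by omega)
    omega
  have hPdeg : ∀ n, 1 ≤ n → (P n).natDegree = 2 ^ n := by
    intro n hn
    rw [hP]
    have h2n : (2:ℕ) ≤ 2 ^ n := le_self_pow₀ (by norm_num) (by omega)
    have : (X : L[X]).natDegree < (itp c n).natDegree := by
      rw [natDegree_X, itp_natDegree]
      omega
    rw [natDegree_sub_eq_left_of_natDegree_lt this, itp_natDegree]
  have hroot_iff : ∀ (n : ℕ) (α : L), (P n).IsRoot α ↔ f^[n] α = α := by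
    intro n α
    rw [hP]
    simp only [IsRoot, eval_sub, eval_X, itp_eval, sub_eq_zero]
    exact Iff.rfl
  -- fixed points of f^[j] for m ∣ j
  set v : ℕ → L → ℕ := fun n α => rootMultiplicity α (P n) with hv
  set R : Finset L := (P N).roots.toFinset with hR
  set F : Finset L := R.filter (fun α => Function.minimalPeriod f α = N) with hF
  have hmemR : ∀ α : L, α ∈ R ↔ f^[N] α = α := by
    intro α
    rw [hR, Multiset.mem_toFinset, mem_roots (hPne N hN), hroot_iff]
  -- sum of multiplicities over R
  have hsumv : ∀ n ∈ N.divisors, ∑ α ∈ R, (v n α : ℤ) = 2 ^ n := by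
    intro n hn
    obtain ⟨hnN, hN0⟩ := Nat.mem_divisors.mp hn
    have hn1 : 1 ≤ n := Nat.pos_of_mem_divisors hn
    have hsub : (P n).roots.toFinset ⊆ R := by
      intro α hα
      rw [Multiset.mem_toFinset, mem_roots (hPne n hn1), hroot_iff] at hα
      rw [hmemR]
      obtain ⟨t, rfl⟩ := hnN
      exact (show Function.IsPeriodicPt f n α from hα).mul_const t
    have step0 : ∑ α ∈ R, v n α = ∑ α ∈ R, (P n).roots.count α :=
      Finset.sum_congr rfl fun α _ => (count_roots _).symm
    have step1 : ∑ α ∈ R, (P n).roots.count α = ∑ α ∈ (P n).roots.toFinset, (P n).roots.count α :=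
      (Finset.sum_subset hsub fun x _ hx =>
        Multiset.count_eq_zero_of_notMem (by simpa using hx)).symm
    have step2 : ∑ α ∈ (P n).roots.toFinset, (P n).roots.count α = Multiset.card (P n).roots :=
      Multiset.toFinset_sum_count_eq _
    have step3 : Multiset.card (P n).roots = 2 ^ n := by
      rw [splits_iff_card_roots.mp (IsAlgClosed.splits (P n)), hPdeg n hn1]
    have h4 : ∑ α ∈ R, v n α = 2 ^ n := by rw [step0, step1, step2, step3]
    exact_mod_cast congrArg (Nat.cast : ℕ → ℤ) h4
  -- pointwise bounds
  have hpoint : ∀ α ∈ R, (0 : ℤ) ≤ ∑ n ∈ N.divisors, (ArithmeticFunction.moebius (N / n) : ℤ) * v n α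
      ∧ (Function.minimalPeriod f α = N →
        (1 : ℤ) ≤ ∑ n ∈ N.divisors, (ArithmeticFunction.moebius (N / n) : ℤ) * v n α) := by
    intro α hα
    rw [hmemR] at hα
    have hper : Function.IsPeriodicPt f N α := hα
    set m := Function.minimalPeriod f α with hm
    have hm1 : 1 ≤ m := hper.minimalPeriod_pos (by omega)
    have hmN : m ∣ N := hper.minimalPeriod_dvd
    have hfixm : ∀ j : ℕ, m ∣ j → (itp c j).eval α = α := by
      intro j hj
      rw [itp_eval]
      obtain ⟨t, rfl⟩ := hj
      exact (Function.isPeriodicPt_minimalPeriod f α).mul_const t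
    set lam : L := (derivative (itp c m)).eval α with hlam
    set r : ℕ := orderOf lam with hr
    set s : ℕ := v (m * r) α with hs
    -- classification of v n α
    have hclass : ∀ n ∈ N.divisors, (v n α : ℤ) =
        (if m ∣ n then 1 else 0) +
        (if IsOfFinOrder lam ∧ m * r ∣ n then (s : ℤ) - 1 else 0) := by
      intro n hn
      have hn1 : 1 ≤ n := Nat.pos_of_mem_divisors hn
      by_cases hmn : m ∣ n
      · have hk1 : 1 ≤ n / m := Nat.one_le_div_iff (by omega) |>.mpr (Nat.le_of_dvd (by omega) hmn)
        have hitp : itp c n = cpow (itp c m) (n / m) := by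
          rw [← itp_mul, Nat.mul_div_cancel' hmn]
        by_cases hfin : IsOfFinOrder lam ∧ r ∣ n / m
        · obtain ⟨hfin, hrk⟩ := hfin
          have hr1 : 1 ≤ r := hfin.orderOf_pos
          have hmrn : m * r ∣ n := by
            obtain ⟨b, hb⟩ := hrk
            exact ⟨b, by rw [mul_assoc, ← hb, Nat.mul_div_cancel' hmn]⟩
          have hvn : v n α = s := by
            have hq : itp c n = cpow (itp c (m * r)) (n / (m * r)) := by
              rw [← itp_mul, Nat.mul_div_cancel' hmrn]
            have hk2 : n / (m * r) ≠ 0 := by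
              have := Nat.one_le_div_iff (show 0 < m * r by positivity) |>.mpr
                (Nat.le_of_dvd (by omega) hmrn)
              omega
            rw [hv]
            show rootMultiplicity α (itp c n - X) = rootMultiplicity α (itp c (m * r) - X)
            rw [hq]
            exact rm_cpow (hfixm _ ⟨r, rfl⟩)
              (by rw [show itp c (m * r) = cpow (itp c m) r from by rw [← itp_mul],
                    cpow_deriv (hfixm m dvd_rfl), ← hlam, hr]
                  exact pow_orderOf_eq_one lam)
              (hPne (m * r)
                (Nat.one_le_iff_ne_zero.mpr (Nat.mul_ne_zero (by omega) (by omega)))) hk2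
          rw [hvn, if_pos hmn, if_pos ⟨hfin, hmrn⟩]
          ring
        · have hlk : lam ^ (n / m) ≠ 1 := by
            intro h1
            have hford : IsOfFinOrder lam := isOfFinOrder_iff_pow_eq_one.mpr ⟨n / m, by omega, h1⟩
            exact hfin ⟨hford, orderOf_dvd_iff_pow_eq_one.mpr h1⟩
          have hvn : v n α = 1 := by
            rw [hv]
            show rootMultiplicity α (itp c n - X) = 1
            refine rm_one (hfixm n hmn) ?_
            rw [hitp, cpow_deriv (hfixm m dvd_rfl), ← hlam]
            exact hlk
          have hnot : ¬ (IsOfFinOrder lam ∧ m * r ∣ n) := by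
            rintro ⟨hford, hmrn⟩
            refine hfin ⟨hford, ?_⟩
            obtain ⟨b, hb⟩ := hmrn
            exact ⟨b, by rw [hb, mul_assoc, Nat.mul_div_cancel_left _ (by omega)]⟩
          rw [hvn, if_pos hmn, if_neg hnot]
          ring
      · have hvn : v n α = 0 := by
          rw [hv]
          refine rootMultiplicity_eq_zero ?_
          rw [hroot_iff]
          intro h
          exact hmn ((show Function.IsPeriodicPt f n α from h).minimalPeriod_dvd)
        have hnot : ¬ (IsOfFinOrder lam ∧ m * r ∣ n) := by
          rintro ⟨_, hmrn⟩
          exact hmn ((dvd_mul_right m r).trans hmrn)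
        rw [hvn, if_neg hmn, if_neg hnot]
        ring
    -- now compute the sum
    have hs1 : IsOfFinOrder lam → 1 ≤ (s : ℤ) := by
      intro hfin
      have hr1 : 1 ≤ r := hr ▸ hfin.orderOf_pos
      have : 1 ≤ s := by
        rw [hs, hv]
        exact rm_pos (hfixm _ ⟨r, rfl⟩)
          (hPne _ (Nat.one_le_iff_ne_zero.mpr (Nat.mul_ne_zero (by omega) (by omega))))
      exact_mod_cast this
    have hsum : ∑ n ∈ N.divisors, (ArithmeticFunction.moebius (N / n) : ℤ) * v n α =
        (if m = N then 1 else 0) +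
        (if IsOfFinOrder lam then ((s : ℤ) - 1) * (if m * r = N then 1 else 0) else 0) := by
      calc ∑ n ∈ N.divisors, (ArithmeticFunction.moebius (N / n) : ℤ) * v n α
          = ∑ n ∈ N.divisors, ((ArithmeticFunction.moebius (N / n) : ℤ) * (if m ∣ n then 1 else 0)
            + (ArithmeticFunction.moebius (N / n) : ℤ) *
              (if IsOfFinOrder lam ∧ m * r ∣ n then (s : ℤ) - 1 else 0)) := by
            refine Finset.sum_congr rfl fun n hn => ?_
            rw [hclass n hn]
            ring
        _ = (if m = N then 1 else 0) +
            (if IsOfFinOrder lam then ((s : ℤ) - 1) * (if m * r = N then 1 else 0) else 0) := by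
            rw [Finset.sum_add_distrib]
            congr 1
            · rw [← sum_moebius_mult N m (by omega) (by omega), Finset.sum_filter]
              refine Finset.sum_congr rfl fun n hn => ?_
              by_cases h : m ∣ n <;> simp [h]
            · by_cases hfin : IsOfFinOrder lam
              · have hr1 : 1 ≤ r := hr ▸ hfin.orderOf_pos
                rw [if_pos hfin,
                  ← sum_moebius_mult N (m * r) (by omega)
                    (Nat.mul_ne_zero (by omega) (by omega)),
                  Finset.sum_filter, Finset.mul_sum]
                refine Finset.sum_congr rfl fun n hn => ?_
                by_cases h : m * r ∣ n
                · rw [if_pos (⟨hfin, h⟩ : IsOfFinOrder lam ∧ m * r ∣ n), if_pos h]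
                  ring
                · rw [if_neg (fun hh => h hh.2), if_neg h, mul_zero, mul_zero]
              · rw [if_neg hfin]
                refine Finset.sum_eq_zero fun n hn => ?_
                rw [if_neg (fun h : IsOfFinOrder lam ∧ m * r ∣ n => hfin h.1), mul_zero]
    have t2 : (0:ℤ) ≤
        (if IsOfFinOrder lam then ((s : ℤ) - 1) * (if m * r = N then 1 else 0) else 0) := by
      by_cases hfin : IsOfFinOrder lam
      · rw [if_pos hfin]
        have := hs1 hfin
        by_cases h2 : m * r = N
        · rw [if_pos h2]; linarith
        · rw [if_neg h2]; simp
      · rw [if_neg hfin]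
    have t1 : (0:ℤ) ≤ (if m = N then 1 else 0) := by
      by_cases h1 : m = N
      · rw [if_pos h1]; norm_num
      · rw [if_neg h1]
    constructor
    · rw [hsum]
      linarith
    · intro hmNeq
      rw [hsum, if_pos hmNeq]
      linarith
  -- assemble
  refine ⟨F, ?_, ?_⟩
  · intro α hα
    obtain ⟨h1, h2⟩ := hα
    have hαR : α ∈ R := (hmemR α).mpr h1
    have hper : Function.IsPeriodicPt f N α := h1
    have hmp : Function.minimalPeriod f α = N := by
      have hdvd := hper.minimalPeriod_dvd
      have hpos := hper.minimalPeriod_pos (by omega)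
      have hle := Nat.le_of_dvd (by omega) hdvd
      rcases Nat.lt_or_ge (Function.minimalPeriod f α) N with h | h
      · exact absurd (Function.isPeriodicPt_minimalPeriod f α)
          (h2 _ hpos h)
      · omega
    simp only [hF, Finset.coe_filter, Set.mem_setOf_eq]
    exact ⟨hαR, hmp⟩
  · have expand : DD N = ∑ α ∈ R, ∑ n ∈ N.divisors,
        (ArithmeticFunction.moebius (N / n) : ℤ) * v n α := by
      rw [Finset.sum_comm]
      rw [DD]
      refine Finset.sum_congr rfl fun n hn => ?_
      rw [← Finset.mul_sum, hsumv n hn]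
    have step1 : (F.card : ℤ) = ∑ α ∈ F, (1 : ℤ) := by simp
    rw [step1, expand]
    refine le_trans (Finset.sum_le_sum ?_) (Finset.sum_le_sum_of_subset_of_nonneg
      (Finset.filter_subset _ _) ?_)
    · intro α hα
      rw [hF, Finset.mem_filter] at hα
      exact (hpoint α hα.1).2 hα.2
    · intro α hα _
      exact (hpoint α hα).1



end St8

/-- Let `K` be a number field.  The set of `c ∈ K` for which the
graph `G(f_c, K)` of `K`-rational preperiodic points of `f_c(z) = z² + c` fails to be
strongly admissible — i.e. some preperiodic `β` has exactly one `K`-rational preimage,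
or for some `N ≥ 2` there are more than `D(N)` points of exact period `N` in `K`, or
`f_c` has exactly one fixed point in `K` — is finite. -/
theorem stmt8 (K : Type) [Field K] [NumberField K] :
    {c : K |
      (∃ β : K, (∃ m n : ℕ, m < n ∧
          (fun z : K => z ^ 2 + c)^[m] β = (fun z : K => z ^ 2 + c)^[n] β) ∧
        {α : K | α ^ 2 + c = β}.encard = 1) ∨
      (∃ N : ℕ, 2 ≤ N ∧ ((DD N).toNat : ℕ∞) <
        {α : K | (fun z : K => z ^ 2 + c)^[N] α = α ∧
          ∀ k, 0 < k → k < N → (fun z : K => z ^ 2 + c)^[k] α ≠ α}.encard) ∨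
      {α : K | α ^ 2 + c = α}.encard = 1}.Finite := by
  classical
  refine Set.Finite.subset ((St8.preper_finite K).union (Set.finite_singleton (1/4 : K))) ?_
  rintro c hc
  simp only [Set.mem_setOf_eq] at hc
  rcases hc with ⟨β, hβpre, hβ⟩ | ⟨N, hN2, hlt⟩ | hfix
  · left
    have hbc : β = c := St8.preimage_unique hβ
    rw [hbc] at hβpre
    exact hβpre
  · exfalso
    set L := AlgebraicClosure K with hL
    have hinj : Function.Injective (algebraMap K L) := (algebraMap K L).injective
    haveI : CharZero L := charZero_of_injective_algebraMap hinj
    obtain ⟨F, hsub, hcard⟩ := St8.core (algebraMap K L c) N (by omega)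
    set S : Set K := {α : K | (fun z : K => z ^ 2 + c)^[N] α = α ∧
          ∀ k, 0 < k → k < N → (fun z : K => z ^ 2 + c)^[k] α ≠ α} with hS
    have himg : (algebraMap K L) '' S ⊆ ↑F := by
      rintro x ⟨α, hα, rfl⟩
      apply hsub
      obtain ⟨hα1, hα2⟩ := hα
      constructor
      · rw [← St8.map_iter (algebraMap K L) c α N, hα1]
      · intro k hk1 hk2 hkα
        refine hα2 k hk1 hk2 (hinj ?_)
        rw [St8.map_iter (algebraMap K L) c α k]
        exact hkα
    have hle : S.encard ≤ ((DD N).toNat : ℕ∞) := by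
      calc S.encard = ((algebraMap K L) '' S).encard := (Set.InjOn.encard_image hinj.injOn).symm
        _ ≤ (↑F : Set L).encard := Set.encard_le_encard himg
        _ = (F.card : ℕ∞) := Set.encard_coe_eq_coe_finsetCard F
        _ ≤ ((DD N).toNat : ℕ∞) := by
            have h1 : F.card ≤ (DD N).toNat := by omega
            exact_mod_cast Nat.cast_le.mpr h1
    exact absurd hlt (not_lt_of_ge hle)
  · right
    rw [Set.mem_singleton_iff]
    exact St8.fixed_unique hfix
end
end

section
/- Let G be an admissible graph and let H be an admissible subgraph of G, i.e., the subgraph induced on a subset of the vertices of G that is closed under the vertex map g and under the negation P ↦ −P. If P is a minimal generating set for G and Q is a minimal generating set for H, then |P| ≥ |Q|. -/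
noncomputable section

/-- A vertex `p` has exact period `N` under the map `g`. -/
def ExactPeriod {V : Type*} (g : V → V) (N : ℕ) (p : V) : Prop :=
  g^[N] p = p ∧ ∀ k, 0 < k → k < N → g^[k] p ≠ p

/-- `Ō(p) = {±g^k(p) : k ≥ 0}`, where `neg` is the negation map of an admissible graph. -/
def OrbitBar {V : Type*} (g : V → V) (neg : V → V) (p : V) : Set V :=
  {q | ∃ k : ℕ, q = g^[k] p ∨ q = neg (g^[k] p)}

/-- Let `G` be an admissible graph and `H` an admissible subgraph,
induced on a vertex subset `W` closed under the vertex map `g` and the negation map.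
If `P` is a minimal generating set for `G` and `Q` is a minimal generating set for `H`,
then `|P| ≥ |Q|`. -/
theorem stmt10 (V : Type) [Fintype V] [DecidableEq V]
    (g neg : V → V)
    (hneg : ∀ P : V, neg P ≠ P ∧ g (neg P) = g P)
    (hfiber : ∀ y : V, ({p : V | g p = y}).ncard = 0 ∨ ({p : V | g p = y}).ncard = 2)
    (hcycle : ∀ N : ℕ, 2 ≤ N → (({p : V | ExactPeriod g N p}).ncard : ℤ) ≤ DD N)
    (W : Finset V) (hWg : ∀ p ∈ W, g p ∈ W) (hWneg : ∀ p ∈ W, neg p ∈ W)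
    (P : Finset V)
    (hPgen : ∀ Q : V, ∃ p ∈ P, Q ∈ OrbitBar g neg p)
    (hPmin : ∀ S : Finset V, (∀ Q : V, ∃ p ∈ S, Q ∈ OrbitBar g neg p) → P.card ≤ S.card)
    (Q : Finset V) (hQW : Q ⊆ W)
    (hQgen : ∀ q ∈ W, ∃ p ∈ Q, q ∈ OrbitBar g neg p)
    (hQmin : ∀ S : Finset V, S ⊆ W → (∀ q ∈ W, ∃ p ∈ S, q ∈ OrbitBar g neg p) →
      Q.card ≤ S.card) :
    Q.card ≤ P.card := by
  classical
  rcases W.eq_empty_or_nonempty with hW | ⟨w₀, hw₀⟩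
  · have h0 : Q.card ≤ (∅ : Finset V).card :=
      hQmin ∅ (Finset.empty_subset _) (by intro q hq; simp [hW] at hq)
    simpa using h0.trans (Nat.zero_le _)
  · set f : V → V := fun p =>
      if h : ∃ k, g^[k] p ∈ W ∨ neg (g^[k] p) ∈ W then
        if g^[Nat.find h] p ∈ W then g^[Nat.find h] p else neg (g^[Nat.find h] p)
      else w₀ with hf
    have hfW : ∀ p, f p ∈ W := by
      intro p
      rw [hf]; beta_reduce
      split_ifs with h h2
      · exact h2
      · rcases Nat.find_spec h with h1 | h1
        · exact absurd h1 h2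
        · exact h1
      · exact hw₀
    have hfgen : ∀ q ∈ W, ∀ p, q ∈ OrbitBar g neg p → q ∈ OrbitBar g neg (f p) := by
      intro q hq p hqp
      obtain ⟨m, hm⟩ := hqp
      have hPm : g^[m] p ∈ W ∨ neg (g^[m] p) ∈ W := by
        rcases hm with h1 | h1
        · exact Or.inl (h1 ▸ hq)
        · exact Or.inr (h1 ▸ hq)
      have h : ∃ k, g^[k] p ∈ W ∨ neg (g^[k] p) ∈ W := ⟨m, hPm⟩
      have hk : Nat.find h ≤ m := Nat.find_min' h hPm
      rw [hf]; beta_reduce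
      simp only [dif_pos h]
      set k := Nat.find h with hkdef
      by_cases hin : g^[k] p ∈ W
      · rw [if_pos hin]
        refine ⟨m - k, ?_⟩
        rw [← Function.iterate_add_apply]
        have : m - k + k = m := Nat.sub_add_cancel hk
        rw [this]
        exact hm
      · rw [if_neg hin]
        rcases Nat.lt_or_ge k m with hlt | hge
        · have hd1 : m - k = (m - k - 1) + 1 := by omega
          have key : g^[m - k] (neg (g^[k] p)) = g^[m] p := by
            rw [hd1, Function.iterate_succ_apply, (hneg (g^[k] p)).2,
              ← Function.iterate_succ_apply, ← Function.iterate_add_apply]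
            congr 1
            omega
          refine ⟨m - k, ?_⟩
          rw [key]
          exact hm
        · have hkm : k = m := le_antisymm hk hge
          rcases hm with h1 | h1
          · exact absurd (hkm ▸ (h1 ▸ hq)) hin
          · exact ⟨0, Or.inl (by simp [h1, hkm])⟩
    set S := P.image f with hS
    have hScard : S.card ≤ P.card := Finset.card_image_le
    have hSW : S ⊆ W := by
      intro s hs
      obtain ⟨p, _, rfl⟩ := Finset.mem_image.mp hs
      exact hfW p
    have hSgen : ∀ q ∈ W, ∃ s ∈ S, q ∈ OrbitBar g neg s := by
      intro q hq
      obtain ⟨p, hp, hqp⟩ := hPgen q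
      exact ⟨f p, Finset.mem_image_of_mem f hp, hfgen q hq p hqp⟩
    exact (hQmin S hSW hSgen).trans hScard
end
end

section
/- Let G be an admissible graph with vertex map g, minimally generated by the ordered list P₁,…,Pₙ. For 0 ≤ i ≤ n let G_i denote the smallest admissible subgraph of G containing P₁,…,P_i (so G₀ is empty, and G_i has vertex set Ō(P₁) ∪ … ∪ Ō(P_i)), and let H_i be the set of vertices in G_i but not in G_{i−1}. Let D = {i : O(P_i) ∩ G_{i−1} = ∅}; for i ∉ D, let κ_i = min{k ≥ 0 : g^k(P_i) ∈ G_{i−1}}, let j_i be the unique index j with g^{κ_i}(P_i) ∈ H_j, and let λ_i = min{ℓ ≥ 0 : g^ℓ(P_{j_i}) = −g^{κ_i}(P_i)} (these are well defined). Let G' be an admissible graph with vertex map g', generated by the list P'₁,…,P'ₙ, with G'_i and H'_i defined analogously. Then there exists a directed graph isomorphism G → G' sending P_i to P'_i for all i if and only if for every i ∈ {1,…,n}: (A) if i ∈ D, then O(P'_i) ∩ G'_{i−1} = ∅ and P'_i has the same preperiod M_i and eventual period N_i as P_i; and (B) if i ∉ D, then O(P'_i) ∩ G'_{i−1} ≠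 ∅ and g'^{κ_i}(P'_i) = −g'^{λ_i}(P'_{j_i}). -/
noncomputable section

/-- For a generating list `P : Fin n → V`, `Gset g neg P i` is the admissible subgraph
`G_i` generated by the first `i` generators, i.e. `Ō(P 0) ∪ ⋯ ∪ Ō(P (i-1))`. -/
def Gset {V : Type*} (g neg : V → V) {n : ℕ} (P : Fin n → V) (i : ℕ) : Set V :=
  {q | ∃ j : Fin n, (j : ℕ) < i ∧ q ∈ OrbitBar g neg (P j)}

/-- The vertex `x` has preperiod exactly `M` and eventual period exactly `N` under `g`. -/
def Portrait {V : Type*} (g : V → V) (x : V) (M N : ℕ) : Prop :=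
  0 < N ∧ g^[M + N] x = g^[M] x ∧
  (∀ n, 0 < n → n < N → g^[M + n] x ≠ g^[M] x) ∧
  (∀ m, m < M → ¬ ∃ n, 0 < n ∧ g^[m + n] x = g^[m] x)

section Helpers

variable {V : Type*} (g neg : V → V)

lemma iter_shift (x : V) {a b : ℕ} (h : g^[a] x = g^[b] x) (c : ℕ) :
    g^[a + c] x = g^[b + c] x := by
  rw [Nat.add_comm a c, Nat.add_comm b c, Function.iterate_add_apply,
    Function.iterate_add_apply, h]

lemma iter_pred (x : V) {k : ℕ} (hk : 0 < k) : g (g^[k - 1] x) = g^[k] x := by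
  conv_rhs => rw [show k = (k - 1) + 1 by omega]
  rw [Function.iterate_succ_apply']

lemma exists_small (x : V) {k l : ℕ} (h : g^[k] x = g^[l] x) (hkl : k < l) (t : ℕ) :
    ∃ m, m < l ∧ g^[t] x = g^[m] x := by
  induction t using Nat.strong_induction_on with
  | _ t ih =>
    rcases lt_or_ge t l with h1 | h1
    · exact ⟨t, h1, rfl⟩
    · have h2 : g^[k + (t - l)] x = g^[l + (t - l)] x := iter_shift g x h _
      have h3 : l + (t - l) = t := by omega
      rw [h3] at h2
      obtain ⟨m, hm, he⟩ := ih (k + (t - l)) (by omega)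
      exact ⟨m, hm, by rw [← h2, he]⟩

lemma portrait_exists [Finite V] (x : V) : ∃ M N : ℕ, Portrait g x M N := by
  classical
  obtain ⟨a, b, hab, he⟩ := Finite.exists_ne_map_eq_of_infinite (fun k : ℕ => g^[k] x)
  have hex : ∃ m : ℕ, ∃ c, 0 < c ∧ g^[m + c] x = g^[m] x := by
    rcases Nat.lt_or_ge a b with h | h
    · exact ⟨a, b - a, by omega, by rw [show a + (b - a) = b by omega]; exact he.symm⟩
    · have h' : b < a := by omega
      exact ⟨b, a - b, by omega, by rw [show b + (a - b) = a by omega]; exact he⟩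
  obtain ⟨c, hc, hcc⟩ := Nat.find_spec hex
  have hex2 : ∃ c, 0 < c ∧ g^[Nat.find hex + c] x = g^[Nat.find hex] x := ⟨c, hc, hcc⟩
  refine ⟨Nat.find hex, Nat.find hex2, (Nat.find_spec hex2).1, (Nat.find_spec hex2).2, ?_, ?_⟩
  · intro m hm hmN
    intro heq
    exact (Nat.find_min hex2 hmN) ⟨hm, heq⟩
  · intro m hm
    exact Nat.find_min hex hm

lemma portrait_iter_eq {x : V} {M N : ℕ} (h : Portrait g x M N) (k l : ℕ) :
    g^[k] x = g^[l] x ↔ k = l ∨ (M ≤ k ∧ M ≤ l ∧ (k - M) % N = (l - M) % N) := by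
  obtain ⟨hN, hper, hmin, hpre⟩ := h
  have hstep : ∀ t, M ≤ t → g^[t + N] x = g^[t] x := by
    intro t ht
    have := iter_shift g x hper (t - M)
    rwa [show M + N + (t - M) = t + N by omega, show M + (t - M) = t by omega] at this
  have hmult : ∀ c t, M ≤ t → g^[t + c * N] x = g^[t] x := by
    intro c
    induction c with
    | zero => simp
    | succ c ih =>
      intro t ht
      have h1 : g^[t + c * N + N] x = g^[t + c * N] x := hstep _ (by omega)
      rw [show t + (c+1) * N = t + c * N + N by ring, h1, ih t ht]
  have hmod : ∀ t, M ≤ t → g^[t] x = g^[M + (t - M) % N] x := by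
    intro t ht
    have h1 : g^[M + (t - M) % N + ((t - M) / N) * N] x = g^[M + (t - M) % N] x :=
      hmult _ _ (by omega)
    have h2 : M + (t - M) % N + ((t - M) / N) * N = t := by
      have := Nat.mod_add_div' (t - M) N
      omega
    rwa [h2] at h1
  have einj : ∀ s t, s < N → t < N → g^[M + s] x = g^[M + t] x → s = t := by
    intro s t hs ht heq
    by_contra hne
    rcases Nat.lt_or_ge s t with hlt | hge
    · have h1 := iter_shift g x heq (N - t)
      rw [show M + t + (N - t) = M + N by omega, hper] at h1
      exact hmin (s + (N - t)) (by omega) (by omega)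
        (by rw [show M + (s + (N - t)) = M + s + (N - t) by omega]; exact h1)
    · have hlt : t < s := by omega
      have h1 := iter_shift g x heq.symm (N - s)
      rw [show M + s + (N - s) = M + N by omega, hper] at h1
      exact hmin (t + (N - s)) (by omega) (by omega)
        (by rw [show M + (t + (N - s)) = M + t + (N - s) by omega]; exact h1)
  constructor
  · intro heq
    by_cases hkl : k = l
    · exact Or.inl hkl
    right
    have hMk : M ≤ k := by
      by_contra hk
      rcases Nat.lt_or_ge k l with hlt | hge
      · exact hpre k (by omega) ⟨l - k, by omega, by rw [show k + (l - k) = l by omega]; exact heq.symm⟩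
      · have hlk : l < k := by omega
        exact hpre l (by omega) ⟨k - l, by omega, by rw [show l + (k - l) = k by omega]; exact heq⟩
    have hMl : M ≤ l := by
      by_contra hl
      rcases Nat.lt_or_ge k l with hlt | hge
      · exact hpre k (by omega) ⟨l - k, by omega, by rw [show k + (l - k) = l by omega]; exact heq.symm⟩
      · exact hpre l (by omega) ⟨k - l, by omega, by rw [show l + (k - l) = k by omega]; exact heq⟩
    refine ⟨hMk, hMl, ?_⟩
    have h1 := (hmod k hMk).symm.trans (heq.trans (hmod l hMl))
    exact einj _ _ (Nat.mod_lt _ hN) (Nat.mod_lt _ hN) h1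
  · rintro (rfl | ⟨hMk, hMl, hm⟩)
    · rfl
    · rw [hmod k hMk, hmod l hMl, hm]

end Helpers
section Helpers2

variable {V : Type*} [Finite V] (g neg : V → V)
  (hneg : ∀ P : V, neg P ≠ P ∧ g (neg P) = g P)
  (hfiber : ∀ y : V, ({p : V | g p = y}).ncard = 0 ∨ ({p : V | g p = y}).ncard = 2)

include hneg hfiber

lemma eq_or_neg {a b : V} (h : g a = g b) : b = a ∨ b = neg a := by
  rcases hfiber (g a) with h0 | h2
  · exfalso
    rw [Set.ncard_eq_zero (Set.toFinite _)] at h0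
    exact absurd h0 (Set.nonempty_iff_ne_empty.mp ⟨a, rfl⟩)
  · obtain ⟨u, v, huv, hS⟩ := Set.ncard_eq_two.mp h2
    have ha : a ∈ ({p : V | g p = g a}) := rfl
    have hna : neg a ∈ ({p : V | g p = g a}) := (hneg a).2
    have hb : b ∈ ({p : V | g p = g a}) := h.symm
    rw [hS] at ha hna hb
    simp only [Set.mem_insert_iff, Set.mem_singleton_iff] at ha hna hb
    have hanna : a ≠ neg a := fun h => (hneg a).1 h.symm
    rcases ha with rfl | rfl
    · rcases hna with h1 | h1
      · exact absurd h1.symm hanna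
      · subst h1; exact hb
    · rcases hna with h1 | h1
      · subst h1; exact hb.symm
      · exact absurd h1.symm hanna

lemma neg_neg_eq (a : V) : neg (neg a) = a := by
  have h : g a = g (neg (neg a)) := by rw [(hneg (neg a)).2, (hneg a).2]
  rcases eq_or_neg g neg hneg hfiber h with h1 | h1
  · exact h1
  · exact absurd h1 (hneg (neg a)).1

lemma neg_inj_adm : Function.Injective neg := by
  intro a b h
  rw [← neg_neg_eq g neg hneg hfiber a, h, neg_neg_eq g neg hneg hfiber]

lemma rel_char (x : V) (a b : ℕ) :
    g^[a] x = neg (g^[b] x) ↔ (g^[a + 1] x = g^[b + 1] x ∧ g^[a] x ≠ g^[b] x) := by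
  constructor
  · intro h
    constructor
    · rw [Function.iterate_succ_apply', Function.iterate_succ_apply', h, (hneg _).2]
    · rw [h]; exact fun he => (hneg _).1 he
  · rintro ⟨h1, h2⟩
    have h3 : g (g^[b] x) = g (g^[a] x) := by
      rw [← Function.iterate_succ_apply' g b x, ← Function.iterate_succ_apply' g a x]
      exact h1.symm
    rcases eq_or_neg g neg hneg hfiber h3 with h4 | h4
    · exact absurd h4 h2
    · exact h4

end Helpers2

section Helpers3

variable {V : Type*} (g neg : V → V)

lemma iter_mem_orbitBar (p : V) (k : ℕ) : g^[k] p ∈ OrbitBar g neg p := ⟨k, Or.inl rfl⟩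

lemma self_mem_orbitBar (p : V) : p ∈ OrbitBar g neg p := ⟨0, Or.inl rfl⟩

lemma neg_iter_mem_orbitBar (p : V) (k : ℕ) : neg (g^[k] p) ∈ OrbitBar g neg p :=
  ⟨k, Or.inr rfl⟩

variable (hneg : ∀ P : V, neg P ≠ P ∧ g (neg P) = g P)
include hneg

lemma orbitBar_g_closed {p x : V} (h : x ∈ OrbitBar g neg p) : g x ∈ OrbitBar g neg p := by
  obtain ⟨k, h | h⟩ := h
  · exact ⟨k + 1, Or.inl (by rw [h, ← Function.iterate_succ_apply' g k p])⟩
  · exact ⟨k + 1, Or.inl (by rw [h, (hneg _).2, ← Function.iterate_succ_apply' g k p])⟩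

lemma orbitBar_iter_closed {p x : V} (h : x ∈ OrbitBar g neg p) (k : ℕ) :
    g^[k] x ∈ OrbitBar g neg p := by
  induction k with
  | zero => exact h
  | succ k ih => rw [Function.iterate_succ_apply']; exact orbitBar_g_closed g neg hneg ih

variable [Finite V]
  (hfiber : ∀ y : V, ({p : V | g p = y}).ncard = 0 ∨ ({p : V | g p = y}).ncard = 2)
include hfiber

lemma orbitBar_neg_closed {p x : V} (h : x ∈ OrbitBar g neg p) :
    neg x ∈ OrbitBar g neg p := by
  obtain ⟨k, h | h⟩ := h
  · exact ⟨k, Or.inr (by rw [h])⟩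
  · exact ⟨k, Or.inl (by rw [h, neg_neg_eq g neg hneg hfiber])⟩

lemma orbitBar_trans {p q : V} (h : q ∈ OrbitBar g neg p) :
    OrbitBar g neg q ⊆ OrbitBar g neg p := by
  rintro x ⟨m, hx | hx⟩
  · exact hx ▸ orbitBar_iter_closed g neg hneg h m
  · exact hx ▸ orbitBar_neg_closed g neg hneg hfiber (orbitBar_iter_closed g neg hneg h m)

end Helpers3

section Helpers4

variable {V : Type*} (g neg : V → V) {n : ℕ} (P : Fin n → V)

lemma gset_zero : Gset g neg P 0 = ∅ := by
  ext x; simp [Gset]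

lemma gset_mono {i i' : ℕ} (h : i ≤ i') : Gset g neg P i ⊆ Gset g neg P i' := by
  rintro x ⟨j, hj, hx⟩; exact ⟨j, lt_of_lt_of_le hj h, hx⟩

lemma orbitBar_subset_gset {j : Fin n} {i : ℕ} (h : (j : ℕ) < i) :
    OrbitBar g neg (P j) ⊆ Gset g neg P i := fun x hx => ⟨j, h, hx⟩

lemma mem_gset_succ {i : ℕ} (hi : i < n) (q : V) :
    q ∈ Gset g neg P (i + 1) ↔ q ∈ Gset g neg P i ∨ q ∈ OrbitBar g neg (P ⟨i, hi⟩) := by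
  constructor
  · rintro ⟨j, hj, hq⟩
    rcases Nat.lt_or_ge (j : ℕ) i with h | h
    · exact Or.inl ⟨j, h, hq⟩
    · have : j = ⟨i, hi⟩ := Fin.ext (show (j : ℕ) = i by omega)
      exact Or.inr (this ▸ hq)
  · rintro (⟨j, hj, hq⟩ | hq)
    · exact ⟨j, by omega, hq⟩
    · exact ⟨⟨i, hi⟩, by simp, hq⟩

variable (hneg : ∀ P : V, neg P ≠ P ∧ g (neg P) = g P)
include hneg

lemma gset_g_closed {i : ℕ} {x : V} (h : x ∈ Gset g neg P i) : g x ∈ Gset g neg P i := by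
  obtain ⟨j, hj, hx⟩ := h
  exact ⟨j, hj, orbitBar_g_closed g neg hneg hx⟩

lemma gset_iter_closed {i : ℕ} {x : V} (h : x ∈ Gset g neg P i) (k : ℕ) :
    g^[k] x ∈ Gset g neg P i := by
  obtain ⟨j, hj, hx⟩ := h
  exact ⟨j, hj, orbitBar_iter_closed g neg hneg hx k⟩

variable [Finite V]
  (hfiber : ∀ y : V, ({p : V | g p = y}).ncard = 0 ∨ ({p : V | g p = y}).ncard = 2)
include hfiber

lemma gset_neg_closed {i : ℕ} {x : V} (h : x ∈ Gset g neg P i) :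
    neg x ∈ Gset g neg P i := by
  obtain ⟨j, hj, hx⟩ := h
  exact ⟨j, hj, orbitBar_neg_closed g neg hneg hfiber hx⟩

end Helpers4
section Helpers5

variable {V : Type*} (g neg : V → V)

lemma iter_ne_of_sep (x : V) {T : Set V} {κ : ℕ}
    (h1 : ∀ k, k < κ → g^[k] x ∉ T) (h2 : g^[κ] x ∈ T)
    {k l : ℕ} (hkl : k < l) (hl : l ≤ κ) : g^[k] x ≠ g^[l] x := by
  intro he
  obtain ⟨m, hm, hmeq⟩ := exists_small g x he hkl κ
  exact h1 m (by omega) (hmeq ▸ h2)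

variable [Finite V]
  (hneg : ∀ P : V, neg P ≠ P ∧ g (neg P) = g P)
  (hfiber : ∀ y : V, ({p : V | g p = y}).ncard = 0 ∨ ({p : V | g p = y}).ncard = 2)
include hneg hfiber

lemma iter_ne_neg_of_sep (x : V) {T : Set V} {κ : ℕ}
    (h1 : ∀ k, k < κ → g^[k] x ∉ T) (h2 : g^[κ] x ∈ T)
    {k l : ℕ} (hk : k < κ) (hl : l < κ) : g^[k] x ≠ neg (g^[l] x) := by
  intro he
  rw [rel_char g neg hneg hfiber] at he
  obtain ⟨he1, he2⟩ := he
  rcases Nat.lt_trichotomy k l with h | h | h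
  · exact iter_ne_of_sep g x h1 h2 (show k + 1 < l + 1 by omega) (by omega) he1
  · exact he2 (by rw [h])
  · exact iter_ne_of_sep g x h1 h2 (show l + 1 < k + 1 by omega) (by omega) he1.symm

lemma gen_notMem {n : ℕ} (P : Fin n → V)
    (hPgen : ∀ Q : V, ∃ i : Fin n, Q ∈ OrbitBar g neg (P i))
    (hPmin : ∀ S : Finset V, (∀ Q : V, ∃ p ∈ S, Q ∈ OrbitBar g neg p) → n ≤ S.card)
    [DecidableEq V]
    (i j : Fin n) (hij : i ≠ j) : P i ∉ OrbitBar g neg (P j) := by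
  classical
  intro hmem
  have hgen2 : ∀ Q : V, ∃ p ∈ (Finset.univ.erase i).image P, Q ∈ OrbitBar g neg p := by
    intro Q
    obtain ⟨m, hm⟩ := hPgen Q
    by_cases hmi : m = i
    · exact ⟨P j, Finset.mem_image_of_mem P (Finset.mem_erase.mpr ⟨hij.symm, Finset.mem_univ j⟩),
        orbitBar_trans g neg hneg hfiber hmem (hmi ▸ hm)⟩
    · exact ⟨P m, Finset.mem_image_of_mem P (Finset.mem_erase.mpr ⟨hmi, Finset.mem_univ m⟩), hm⟩
  have hc := hPmin _ hgen2
  have hcard : ((Finset.univ.erase i).image P).card ≤ n - 1 := by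
    calc ((Finset.univ.erase i).image P).card ≤ (Finset.univ.erase i).card :=
          Finset.card_image_le
      _ = n - 1 := by rw [Finset.card_erase_of_mem (Finset.mem_univ i), Finset.card_univ,
          Fintype.card_fin]
  have hn : 0 < n := i.pos
  omega

end Helpers5

/-- isomorphism criterion for admissible graphs.  Let `G` be an
admissible graph (vertex map `g`, negation `neg`) minimally generated by the ordered
list `P 0, …, P (n-1)`, and `G'` an admissible graph (vertex map `g'`, negation `neg'`)
generated by `P' 0, …, P' (n-1)`.  There is a directed graph isomorphism `G → G'`
sending `P i ↦ P' i` iff for every `i`: if `O(P i)` is disjoint from `G_{i-1}` then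
`O(P' i)` is disjoint from `G'_{i-1}` and `P' i` has the same preperiod and eventual
period as `P i`; and if `O(P i)` meets `G_{i-1}` then `O(P' i)` meets `G'_{i-1}` and
`g'^{κ_i}(P'_i) = −g'^{λ_i}(P'_{j_i})`, where `κ_i, j_i, λ_i` are characterized by:
`κ_i` is least with `g^{κ_i}(P i) ∈ G_{i-1}`, `j_i` is the unique `j` with
`g^{κ_i}(P i) ∈ H_j = G_j \ G_{j-1}`, and `λ_i` is least with
`g^{λ_i}(P (j_i)) = −g^{κ_i}(P i)`. -/
theorem stmt11 (V V' : Type) [Fintype V] [DecidableEq V] [Fintype V'] [DecidableEq V']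
    (g neg : V → V)
    (hneg : ∀ P : V, neg P ≠ P ∧ g (neg P) = g P)
    (hfiber : ∀ y : V, ({p : V | g p = y}).ncard = 0 ∨ ({p : V | g p = y}).ncard = 2)
    (hcycle : ∀ N : ℕ, 2 ≤ N → (({p : V | ExactPeriod g N p}).ncard : ℤ) ≤ DD N)
    (g' neg' : V' → V')
    (hneg' : ∀ P : V', neg' P ≠ P ∧ g' (neg' P) = g' P)
    (hfiber' : ∀ y : V', ({p : V' | g' p = y}).ncard = 0 ∨ ({p : V' | g' p = y}).ncard = 2)
    (hcycle' : ∀ N : ℕ, 2 ≤ N → (({p : V' | ExactPeriod g' N p}).ncard : ℤ) ≤ DD N)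
    (n : ℕ) (P : Fin n → V) (hPinj : Function.Injective P)
    (hPgen : ∀ Q : V, ∃ i : Fin n, Q ∈ OrbitBar g neg (P i))
    (hPmin : ∀ S : Finset V, (∀ Q : V, ∃ p ∈ S, Q ∈ OrbitBar g neg p) → n ≤ S.card)
    (P' : Fin n → V')
    (hP'gen : ∀ Q : V', ∃ i : Fin n, Q ∈ OrbitBar g' neg' (P' i)) :
    (∃ φ : V → V', Function.Bijective φ ∧ (∀ q : V, φ (g q) = g' (φ q)) ∧
        ∀ i : Fin n, φ (P i) = P' i)
    ↔ ∀ i : Fin n,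
        ((∀ k : ℕ, g^[k] (P i) ∉ Gset g neg P (i : ℕ)) →
          (∀ k : ℕ, g'^[k] (P' i) ∉ Gset g' neg' P' (i : ℕ)) ∧
          (∀ M N : ℕ, Portrait g (P i) M N ↔ Portrait g' (P' i) M N)) ∧
        ((∃ k : ℕ, g^[k] (P i) ∈ Gset g neg P (i : ℕ)) →
          (∃ k : ℕ, g'^[k] (P' i) ∈ Gset g' neg' P' (i : ℕ)) ∧
          (∀ (κ : ℕ) (j : Fin n) (lam : ℕ),
            (g^[κ] (P i) ∈ Gset g neg P (i : ℕ) ∧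
              ∀ k, k < κ → g^[k] (P i) ∉ Gset g neg P (i : ℕ)) →
            (g^[κ] (P i) ∈ Gset g neg P ((j : ℕ) + 1) ∧
              g^[κ] (P i) ∉ Gset g neg P (j : ℕ)) →
            (g^[lam] (P j) = neg (g^[κ] (P i)) ∧
              ∀ l, l < lam → g^[l] (P j) ≠ neg (g^[κ] (P i))) →
            g'^[κ] (P' i) = neg' (g'^[lam] (P' j)))) := by
  classical
  constructor
  · -- Forward direction
    rintro ⟨φ, hbij, hgc, hPP⟩
    have hnegc : ∀ x : V, φ (neg x) = neg' (φ x) := by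
      intro x
      have h : g' (φ x) = g' (φ (neg x)) := by rw [← hgc, ← hgc, (hneg x).2]
      rcases eq_or_neg g' neg' hneg' hfiber' h with h1 | h1
      · exact absurd (hbij.1 h1) (hneg x).1
      · exact h1
    have hiter : ∀ (x : V) (k : ℕ), φ (g^[k] x) = g'^[k] (φ x) := by
      intro x k
      induction k with
      | zero => rfl
      | succ k ih =>
        rw [Function.iterate_succ_apply', Function.iterate_succ_apply', hgc, ih]
    have himg : ∀ (i : ℕ) (y : V'),
        y ∈ Gset g' neg' P' i ↔ ∃ x ∈ Gset g neg P i, φ x = y := by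
      intro i y
      constructor
      · rintro ⟨j, hj, k, hk | hk⟩
        · exact ⟨g^[k] (P j), ⟨j, hj, iter_mem_orbitBar g neg _ k⟩,
            by rw [hiter, hPP]; exact hk.symm⟩
        · exact ⟨neg (g^[k] (P j)), ⟨j, hj, neg_iter_mem_orbitBar g neg _ k⟩,
            by rw [hnegc, hiter, hPP]; exact hk.symm⟩
      · rintro ⟨x, ⟨j, hj, k, hk | hk⟩, rfl⟩
        · exact ⟨j, hj, k, Or.inl (by rw [hk, hiter, hPP])⟩
        · exact ⟨j, hj, k, Or.inr (by rw [hk, hnegc, hiter, hPP])⟩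
    intro i
    constructor
    · intro hD
      constructor
      · intro k hk
        obtain ⟨x, hx, hφx⟩ := (himg (i : ℕ) _).mp hk
        have h1 : φ x = φ (g^[k] (P i)) := by rw [hφx, ← hPP i, ← hiter]
        exact hD k ((hbij.1 h1) ▸ hx)
      · intro M N
        have htr : ∀ a b : ℕ, g^[a] (P i) = g^[b] (P i) ↔ g'^[a] (P' i) = g'^[b] (P' i) := by
          intro a b
          rw [← hPP i, ← hiter, ← hiter]
          exact ⟨fun h => by rw [h], fun h => hbij.1 h⟩
        unfold Portrait
        constructor
        · rintro ⟨h1, h2, h3, h4⟩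
          refine ⟨h1, (htr _ _).mp h2, fun m hm1 hm2 he => h3 m hm1 hm2 ((htr _ _).mpr he),
            fun m hm he => h4 m hm ?_⟩
          obtain ⟨c, hc, hce⟩ := he
          exact ⟨c, hc, (htr _ _).mpr hce⟩
        · rintro ⟨h1, h2, h3, h4⟩
          refine ⟨h1, (htr _ _).mpr h2, fun m hm1 hm2 he => h3 m hm1 hm2 ((htr _ _).mp he),
            fun m hm he => h4 m hm ?_⟩
          obtain ⟨c, hc, hce⟩ := he
          exact ⟨c, hc, (htr _ _).mp hce⟩
    · rintro ⟨k, hk⟩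
      constructor
      · exact ⟨k, (himg (i : ℕ) _).mpr ⟨g^[k] (P i), hk, by rw [hiter, hPP]⟩⟩
      · intro κ j lam h1 h2 h3
        have he := h3.1
        have h4 : g'^[lam] (P' j) = neg' (g'^[κ] (P' i)) := by
          rw [← hPP j, ← hPP i, ← hiter, ← hiter, he, hnegc]
        rw [h4, neg_neg_eq g' neg' hneg' hfiber']
  · -- Backward direction
    intro hcond
    have key : ∀ i : ℕ, i ≤ n → ∃ φ : V → V',
        Set.InjOn φ (Gset g neg P i) ∧
        (∀ y : V', y ∈ Gset g' neg' P' i ↔ ∃ x ∈ Gset g neg P i, φ x = y) ∧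
        (∀ x ∈ Gset g neg P i, φ (g x) = g' (φ x)) ∧
        (∀ x ∈ Gset g neg P i, φ (neg x) = neg' (φ x)) ∧
        (∀ j : Fin n, (j : ℕ) < i → φ (P j) = P' j) := by
      intro i
      induction i with
      | zero =>
        intro _
        have hφ0 : ∃ _φ : V → V', True := by
          rcases isEmpty_or_nonempty V with hV | hV
          · exact ⟨fun x => isEmptyElim x, trivial⟩
          · obtain ⟨x⟩ := hV
            obtain ⟨i0, _⟩ := hPgen x
            exact ⟨fun _ => P' i0, trivial⟩
        obtain ⟨φ, -⟩ := hφ0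
        refine ⟨φ, ?_, ?_, ?_, ?_, ?_⟩ <;> simp [gset_zero]
      | succ i ih =>
        intro hin1
        have hin : i < n := hin1
        obtain ⟨φ, hinj, himg, hgc, hnc, hP⟩ := ih (by omega)
        set I : Fin n := ⟨i, hin⟩ with hI
        have hIval : (I : ℕ) = i := rfl
        have hφiter : ∀ (j : Fin n), (j : ℕ) < i → ∀ k, φ (g^[k] (P j)) = g'^[k] (P' j) := by
          intro j hj k
          induction k with
          | zero => exact hP j hj
          | succ k ihk =>
            rw [Function.iterate_succ_apply', Function.iterate_succ_apply',
              hgc _ (orbitBar_subset_gset g neg P hj (iter_mem_orbitBar g neg (P j) k)), ihk]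
        by_cases hD : ∀ k : ℕ, g^[k] (P I) ∉ Gset g neg P i
        · -- CASE A : orbit of P I disjoint from G_{i-1}
          obtain ⟨hD', hport⟩ := (hcond I).1 hD
          obtain ⟨M, N, hPor⟩ := portrait_exists g (P I)
          have hPor' : Portrait g' (P' I) M N := (hport M N).mp hPor
          have trans_eq : ∀ a b : ℕ,
              g^[a] (P I) = g^[b] (P I) ↔ g'^[a] (P' I) = g'^[b] (P' I) := by
            intro a b
            rw [portrait_iter_eq g hPor, portrait_iter_eq g' hPor']
          have trans_neg : ∀ a b : ℕ,
              g^[a] (P I) = neg (g^[b] (P I)) ↔ g'^[a] (P' I) = neg' (g'^[b] (P' I)) := by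
            intro a b
            rw [rel_char g neg hneg hfiber, rel_char g' neg' hneg' hfiber',
              trans_eq (a + 1) (b + 1)]
            constructor
            · rintro ⟨h1, h2⟩; exact ⟨h1, fun he => h2 ((trans_eq a b).mpr he)⟩
            · rintro ⟨h1, h2⟩; exact ⟨h1, fun he => h2 ((trans_eq a b).mp he)⟩
          obtain ⟨ψ, hA1, hA2, hA3⟩ : ∃ ψ : V → V',
              (∀ k, ψ (g^[k] (P I)) = g'^[k] (P' I)) ∧
              (∀ k, ψ (neg (g^[k] (P I))) = neg' (g'^[k] (P' I))) ∧
              (∀ x ∈ Gset g neg P i, ψ x = φ x) := by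
            refine ⟨fun x =>
              if h1 : ∃ k, x = g^[k] (P I) then g'^[Nat.find h1] (P' I)
              else if h2 : ∃ k, x = neg (g^[k] (P I)) then neg' (g'^[Nat.find h2] (P' I))
              else φ x, ?_, ?_, ?_⟩
            · intro k
              have h1 : ∃ m, g^[k] (P I) = g^[m] (P I) := ⟨k, rfl⟩
              simp only [dif_pos h1]
              exact ((trans_eq _ _).mp (Nat.find_spec h1)).symm
            · intro k
              by_cases h1 : ∃ m, neg (g^[k] (P I)) = g^[m] (P I)
              · simp only [dif_pos h1]
                exact (trans_neg _ _).mp (Nat.find_spec h1).symm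
              · simp only [dif_neg h1]
                have h2 : ∃ m, neg (g^[k] (P I)) = neg (g^[m] (P I)) := ⟨k, rfl⟩
                simp only [dif_pos h2]
                have hs' : g^[k] (P I) = g^[Nat.find h2] (P I) :=
                  neg_inj_adm g neg hneg hfiber (Nat.find_spec h2)
                rw [(trans_eq _ _).mp hs']
            · intro x hx
              have h1 : ¬ ∃ k, x = g^[k] (P I) := by
                rintro ⟨k, rfl⟩; exact hD k hx
              have h2 : ¬ ∃ k, x = neg (g^[k] (P I)) := by
                rintro ⟨k, hk⟩
                have h3 := gset_neg_closed g neg P hneg hfiber hx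
                rw [hk, neg_neg_eq g neg hneg hfiber] at h3
                exact hD k h3
              simp only [dif_neg h1, dif_neg h2]
          have hA4 : ∀ k, g'^[k] (P' I) ∉ Gset g' neg' P' i := hD'
          have hA5 : ∀ k, neg' (g'^[k] (P' I)) ∉ Gset g' neg' P' i := by
            intro k hk
            have h3 := gset_neg_closed g' neg' P' hneg' hfiber' hk
            rw [neg_neg_eq g' neg' hneg' hfiber'] at h3
            exact hD' k h3
          have hdec : ∀ x, x ∈ Gset g neg P (i + 1) →
              x ∈ Gset g neg P i ∨ (∃ k, x = g^[k] (P I)) ∨ (∃ k, x = neg (g^[k] (P I))) := by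
            intro x hx
            rcases (mem_gset_succ g neg P hin x).mp hx with h | ⟨k, h | h⟩
            · exact Or.inl h
            · exact Or.inr (Or.inl ⟨k, h⟩)
            · exact Or.inr (Or.inr ⟨k, h⟩)
          refine ⟨ψ, ?_, ?_, ?_, ?_, ?_⟩
          · -- InjOn
            intro x hx y hy hxy
            rcases hdec x hx with hx1 | ⟨k, rfl⟩ | ⟨k, rfl⟩ <;>
              rcases hdec y hy with hy1 | ⟨l, rfl⟩ | ⟨l, rfl⟩
            · rw [hA3 x hx1, hA3 y hy1] at hxy; exact hinj hx1 hy1 hxy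
            · have h5 : φ x ∈ Gset g' neg' P' i := (himg _).mpr ⟨x, hx1, rfl⟩
              rw [hA3 x hx1, hA1 l] at hxy
              rw [hxy] at h5
              exact absurd h5 (hA4 l)
            · have h5 : φ x ∈ Gset g' neg' P' i := (himg _).mpr ⟨x, hx1, rfl⟩
              rw [hA3 x hx1, hA2 l] at hxy
              rw [hxy] at h5
              exact absurd h5 (hA5 l)
            · have h5 : φ y ∈ Gset g' neg' P' i := (himg _).mpr ⟨y, hy1, rfl⟩
              rw [hA1 k, hA3 y hy1] at hxy
              rw [← hxy] at h5
              exact absurd h5 (hA4 k)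
            · rw [hA1 k, hA1 l] at hxy
              exact (trans_eq k l).mpr hxy
            · rw [hA1 k, hA2 l] at hxy
              exact (trans_neg k l).mpr hxy
            · have h5 : φ y ∈ Gset g' neg' P' i := (himg _).mpr ⟨y, hy1, rfl⟩
              rw [hA2 k, hA3 y hy1] at hxy
              rw [← hxy] at h5
              exact absurd h5 (hA5 k)
            · rw [hA2 k, hA1 l] at hxy
              exact ((trans_neg l k).mpr hxy.symm).symm
            · rw [hA2 k, hA2 l] at hxy
              rw [(trans_eq k l).mpr (neg_inj_adm g' neg' hneg' hfiber' hxy)]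
          · -- image
            intro y
            constructor
            · intro hy
              rcases (mem_gset_succ g' neg' P' hin y).mp hy with h | ⟨k, h | h⟩
              · obtain ⟨x, hx, rfl⟩ := (himg y).mp h
                exact ⟨x, gset_mono g neg P (Nat.le_succ i) hx, hA3 x hx⟩
              · exact ⟨g^[k] (P I),
                  (mem_gset_succ g neg P hin _).mpr (Or.inr (iter_mem_orbitBar g neg _ k)),
                  (hA1 k).trans h.symm⟩
              · exact ⟨neg (g^[k] (P I)),
                  (mem_gset_succ g neg P hin _).mpr (Or.inr (neg_iter_mem_orbitBar g neg _ k)),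
                  (hA2 k).trans h.symm⟩
            · rintro ⟨x, hx, rfl⟩
              rcases hdec x hx with h | ⟨k, rfl⟩ | ⟨k, rfl⟩
              · rw [hA3 x h]
                exact gset_mono g' neg' P' (Nat.le_succ i) ((himg _).mpr ⟨x, h, rfl⟩)
              · rw [hA1 k]
                exact (mem_gset_succ g' neg' P' hin _).mpr
                  (Or.inr (iter_mem_orbitBar g' neg' _ k))
              · rw [hA2 k]
                exact (mem_gset_succ g' neg' P' hin _).mpr
                  (Or.inr (neg_iter_mem_orbitBar g' neg' _ k))
          · -- g-commute
            intro x hx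
            rcases hdec x hx with h | ⟨k, rfl⟩ | ⟨k, rfl⟩
            · rw [hA3 _ (gset_g_closed g neg P hneg h), hA3 _ h, hgc _ h]
            · rw [← Function.iterate_succ_apply' g k (P I), hA1 (k + 1), hA1 k,
                ← Function.iterate_succ_apply' g' k (P' I)]
            · rw [(hneg (g^[k] (P I))).2, ← Function.iterate_succ_apply' g k (P I),
                hA1 (k + 1), hA2 k, (hneg' (g'^[k] (P' I))).2,
                ← Function.iterate_succ_apply' g' k (P' I)]
          · -- neg-commute
            intro x hx
            rcases hdec x hx with h | ⟨k, rfl⟩ | ⟨k, rfl⟩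
            · rw [hA3 _ (gset_neg_closed g neg P hneg hfiber h), hA3 _ h, hnc _ h]
            · rw [hA2 k, hA1 k]
            · rw [neg_neg_eq g neg hneg hfiber, hA1 k, hA2 k,
                neg_neg_eq g' neg' hneg' hfiber']
          · -- generators
            intro j hj
            rcases Nat.lt_or_ge (j : ℕ) i with h | h
            · rw [hA3 _ (orbitBar_subset_gset g neg P h (self_mem_orbitBar g neg (P j)))]
              exact hP j h
            · have hji : j = I := Fin.ext (by omega)
              rw [hji]
              simpa using hA1 0
        · -- CASE B : orbit of P I meets G_{i-1}
          push_neg at hD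
          obtain ⟨hEx', hBB⟩ := (hcond I).2 hD
          have hκex : ∃ k, g^[k] (P I) ∈ Gset g neg P i := hD
          set κ := Nat.find hκex with hκdef
          have hκmem : g^[κ] (P I) ∈ Gset g neg P i := Nat.find_spec hκex
          have hκmin : ∀ k, k < κ → g^[k] (P I) ∉ Gset g neg P i :=
            fun k hk => Nat.find_min hκex hk
          have hgen_ne : ∀ (a b : Fin n), a ≠ b → P a ∉ OrbitBar g neg (P b) :=
            gen_notMem g neg hneg hfiber P hPgen hPmin
          have hκpos : 0 < κ := by
            rcases Nat.eq_zero_or_pos κ with h0 | h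
            · exfalso
              have hPmem : P I ∈ Gset g neg P i := by
                have := hκmem
                rw [h0] at this
                simpa using this
              obtain ⟨j, hj, hmem⟩ := hPmem
              refine hgen_ne I j ?_ hmem
              rintro rfl
              omega
            · exact h
          have hQ1 : ∃ m : ℕ, g^[κ] (P I) ∈ Gset g neg P (m + 1) := by
            have hipos : 0 < i := by
              by_contra h0
              have hi0 : i = 0 := by omega
              rw [hi0, gset_zero] at hκmem
              exact hκmem
            exact ⟨i - 1, by rwa [show i - 1 + 1 = i by omega]⟩
          set m₀ := Nat.find hQ1 with hm₀def
          have hQm : g^[κ] (P I) ∈ Gset g neg P (m₀ + 1) := Nat.find_spec hQ1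
          have hQnot : g^[κ] (P I) ∉ Gset g neg P m₀ := by
            rcases Nat.eq_zero_or_pos m₀ with h0 | h0
            · rw [h0, gset_zero]; exact fun h => h
            · intro hmem
              exact Nat.find_min hQ1 (show m₀ - 1 < m₀ by omega)
                (by rwa [show m₀ - 1 + 1 = m₀ by omega])
          obtain ⟨J, hJm, hQJ⟩ := hQm
          have hJval : (J : ℕ) = m₀ := by
            rcases Nat.lt_or_ge (J : ℕ) m₀ with h | h
            · exact absurd ⟨J, h, hQJ⟩ hQnot
            · omega
          have hJlt : (J : ℕ) < i := by
            by_contra h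
            exact hQnot (gset_mono g neg P (by omega) hκmem)
          have hJI : J ≠ I := by
            intro h
            rw [h] at hJlt
            omega
          have hlamex : ∃ l, g^[l] (P J) = neg (g^[κ] (P I)) := by
            obtain ⟨m, hm | hm⟩ := hQJ
            · exfalso
              rcases Nat.eq_zero_or_pos m with h0 | h0
              · rw [h0] at hm
                simp only [Function.iterate_zero_apply] at hm
                have hmem2 : P J ∈ OrbitBar g neg (P I) :=
                  hm ▸ iter_mem_orbitBar g neg (P I) κ
                exact hgen_ne J I hJI hmem2
              · have hpre : g^[m - 1] (P J) ∈ Gset g neg P i :=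
                  orbitBar_subset_gset g neg P hJlt (iter_mem_orbitBar g neg (P J) (m - 1))
                have heq : g (g^[m - 1] (P J)) = g (g^[κ - 1] (P I)) := by
                  rw [iter_pred g (P J) (show 0 < m by omega), iter_pred g (P I) hκpos]
                  exact hm.symm
                rcases eq_or_neg g neg hneg hfiber heq with h1 | h1
                · rw [← h1] at hpre
                  exact hκmin (κ - 1) (by omega) hpre
                · have h2 : g^[κ - 1] (P I) ∈ Gset g neg P i := by
                    have h3 := gset_neg_closed g neg P hneg hfiber hpre
                    rwa [← h1] at h3
                  exact hκmin (κ - 1) (by omega) h2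
            · exact ⟨m, by rw [hm, neg_neg_eq g neg hneg hfiber]⟩
          set lam := Nat.find hlamex with hlamdef
          have hlspec : g^[lam] (P J) = neg (g^[κ] (P I)) := Nat.find_spec hlamex
          have hlmin : ∀ l, l < lam → g^[l] (P J) ≠ neg (g^[κ] (P I)) :=
            fun l hl => Nat.find_min hlamex hl
          have E : g'^[κ] (P' I) = neg' (g'^[lam] (P' J)) := by
            refine hBB κ J lam ⟨hκmem, hκmin⟩ ⟨?_, ?_⟩ ⟨hlspec, hlmin⟩
            · rw [hJval]; exact Nat.find_spec hQ1
            · rw [hJval]; exact hQnot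
          have hQval : φ (g^[κ] (P I)) = g'^[κ] (P' I) := by
            have h1 : neg (g^[lam] (P J)) = g^[κ] (P I) := by
              rw [hlspec, neg_neg_eq g neg hneg hfiber]
            rw [← h1,
              hnc _ (orbitBar_subset_gset g neg P hJlt (iter_mem_orbitBar g neg (P J) lam)),
              hφiter J hJlt lam, ← E]
          have hE2 : g'^[κ] (P' I) ∈ Gset g' neg' P' i := by
            rw [E]
            exact ⟨J, hJlt, neg_iter_mem_orbitBar g' neg' (P' J) lam⟩
          have hκ' : ∀ k, k < κ → g'^[k] (P' I) ∉ Gset g' neg' P' i := by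
            intro k hk hkmem
            have h1 : g'^[κ - 1] (P' I) ∈ Gset g' neg' P' i := by
              have h2 := gset_iter_closed g' neg' P' hneg' hkmem (κ - 1 - k)
              rwa [← Function.iterate_add_apply, show κ - 1 - k + k = κ - 1 by omega] at h2
            obtain ⟨y, hy, hyv⟩ := (himg _).mp h1
            have h3 : φ (g y) = φ (g^[κ] (P I)) := by
              rw [hgc _ hy, hyv, hQval, iter_pred g' (P' I) hκpos]
            have h4 : g y = g^[κ] (P I) := hinj (gset_g_closed g neg P hneg hy) hκmem h3
            have h5 : g (g^[κ - 1] (P I)) = g y := by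
              rw [iter_pred g (P I) hκpos, h4]
            rcases eq_or_neg g neg hneg hfiber h5 with h6 | h6
            · rw [h6] at hy
              exact hκmin (κ - 1) (by omega) hy
            · have h7 := gset_neg_closed g neg P hneg hfiber hy
              rw [h6, neg_neg_eq g neg hneg hfiber] at h7
              exact hκmin (κ - 1) (by omega) h7
          have hGd : ∀ k l, k < l → l ≤ κ → g^[k] (P I) ≠ g^[l] (P I) :=
            fun k l hkl hl => iter_ne_of_sep g (P I) hκmin hκmem hkl hl
          have hG'd : ∀ k l, k < l → l ≤ κ → g'^[k] (P' I) ≠ g'^[l] (P' I) :=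
            fun k l hkl hl => iter_ne_of_sep g' (P' I) hκ' hE2 hkl hl
          have hGm : ∀ k l, k < κ → l < κ → g^[k] (P I) ≠ neg (g^[l] (P I)) :=
            fun k l hk hl => iter_ne_neg_of_sep g neg hneg hfiber (P I) hκmin hκmem hk hl
          have hG'm : ∀ k l, k < κ → l < κ → g'^[k] (P' I) ≠ neg' (g'^[l] (P' I)) :=
            fun k l hk hl => iter_ne_neg_of_sep g' neg' hneg' hfiber' (P' I) hκ' hE2 hk hl
          obtain ⟨ψ, hB1, hB2, hB3⟩ : ∃ ψ : V → V',
              (∀ k, k < κ → ψ (g^[k] (P I)) = g'^[k] (P' I)) ∧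
              (∀ k, k < κ → ψ (neg (g^[k] (P I))) = neg' (g'^[k] (P' I))) ∧
              (∀ x ∈ Gset g neg P i, ψ x = φ x) := by
            refine ⟨fun x =>
              if h1 : ∃ k, k < κ ∧ x = g^[k] (P I) then g'^[Nat.find h1] (P' I)
              else if h2 : ∃ k, k < κ ∧ x = neg (g^[k] (P I)) then
                neg' (g'^[Nat.find h2] (P' I))
              else φ x, ?_, ?_, ?_⟩
            · intro k hk
              have h1 : ∃ m, m < κ ∧ g^[k] (P I) = g^[m] (P I) := ⟨k, hk, rfl⟩
              simp only [dif_pos h1]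
              obtain ⟨hm1, hm2⟩ := Nat.find_spec h1
              have hfk : Nat.find h1 = k := by
                rcases Nat.lt_trichotomy (Nat.find h1) k with h | h | h
                · exact absurd hm2.symm (hGd _ _ h (le_of_lt hk))
                · exact h
                · exact absurd hm2 (hGd _ _ h (le_of_lt hm1))
              rw [hfk]
            · intro k hk
              have h1 : ¬ ∃ m, m < κ ∧ neg (g^[k] (P I)) = g^[m] (P I) := by
                rintro ⟨m, hm1, hm2⟩
                exact hGm m k hm1 hk hm2.symm
              simp only [dif_neg h1]
              have h2 : ∃ m, m < κ ∧ neg (g^[k] (P I)) = neg (g^[m] (P I)) := ⟨k, hk, rfl⟩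
              simp only [dif_pos h2]
              obtain ⟨hm1, hm2⟩ := Nat.find_spec h2
              have hm2' : g^[k] (P I) = g^[Nat.find h2] (P I) :=
                neg_inj_adm g neg hneg hfiber hm2
              have hfk : Nat.find h2 = k := by
                rcases Nat.lt_trichotomy (Nat.find h2) k with h | h | h
                · exact absurd hm2'.symm (hGd _ _ h (le_of_lt hk))
                · exact h
                · exact absurd hm2' (hGd _ _ h (le_of_lt hm1))
              rw [hfk]
            · intro x hx
              have h1 : ¬ ∃ k, k < κ ∧ x = g^[k] (P I) := by
                rintro ⟨k, hk, rfl⟩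
                exact hκmin k hk hx
              have h2 : ¬ ∃ k, k < κ ∧ x = neg (g^[k] (P I)) := by
                rintro ⟨k, hk, hkx⟩
                have h3 := gset_neg_closed g neg P hneg hfiber hx
                rw [hkx, neg_neg_eq g neg hneg hfiber] at h3
                exact hκmin k hk h3
              simp only [dif_neg h1, dif_neg h2]
          have hB5 : ∀ k, k < κ → neg' (g'^[k] (P' I)) ∉ Gset g' neg' P' i := by
            intro k hk hmem
            have h3 := gset_neg_closed g' neg' P' hneg' hfiber' hmem
            rw [neg_neg_eq g' neg' hneg' hfiber'] at h3
            exact hκ' k hk h3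
          have hdec : ∀ x, x ∈ Gset g neg P (i + 1) →
              x ∈ Gset g neg P i ∨ (∃ k, k < κ ∧ x = g^[k] (P I)) ∨
                (∃ k, k < κ ∧ x = neg (g^[k] (P I))) := by
            intro x hx
            rcases (mem_gset_succ g neg P hin x).mp hx with h | ⟨k, h | h⟩
            · exact Or.inl h
            · rcases Nat.lt_or_ge k κ with hk | hk
              · exact Or.inr (Or.inl ⟨k, hk, h⟩)
              · left
                rw [h, show k = (k - κ) + κ by omega, Function.iterate_add_apply]
                exact gset_iter_closed g neg P hneg hκmem (k - κ)
            · rcases Nat.lt_or_ge k κ with hk | hk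
              · exact Or.inr (Or.inr ⟨k, hk, h⟩)
              · left
                rw [h]
                apply gset_neg_closed g neg P hneg hfiber
                rw [show k = (k - κ) + κ by omega, Function.iterate_add_apply]
                exact gset_iter_closed g neg P hneg hκmem (k - κ)
          have hdec' : ∀ k, κ ≤ k → g'^[k] (P' I) ∈ Gset g' neg' P' i := by
            intro k hk
            rw [show k = (k - κ) + κ by omega, Function.iterate_add_apply]
            exact gset_iter_closed g' neg' P' hneg' hE2 (k - κ)
          refine ⟨ψ, ?_, ?_, ?_, ?_, ?_⟩
          · -- InjOn
            intro x hx y hy hxy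
            rcases hdec x hx with hx1 | ⟨k, hk, rfl⟩ | ⟨k, hk, rfl⟩ <;>
              rcases hdec y hy with hy1 | ⟨l, hl, rfl⟩ | ⟨l, hl, rfl⟩
            · rw [hB3 x hx1, hB3 y hy1] at hxy; exact hinj hx1 hy1 hxy
            · have h5 : φ x ∈ Gset g' neg' P' i := (himg _).mpr ⟨x, hx1, rfl⟩
              rw [hB3 x hx1, hB1 l hl] at hxy
              rw [hxy] at h5
              exact absurd h5 (hκ' l hl)
            · have h5 : φ x ∈ Gset g' neg' P' i := (himg _).mpr ⟨x, hx1, rfl⟩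
              rw [hB3 x hx1, hB2 l hl] at hxy
              rw [hxy] at h5
              exact absurd h5 (hB5 l hl)
            · have h5 : φ y ∈ Gset g' neg' P' i := (himg _).mpr ⟨y, hy1, rfl⟩
              rw [hB1 k hk, hB3 y hy1] at hxy
              rw [← hxy] at h5
              exact absurd h5 (hκ' k hk)
            · rw [hB1 k hk, hB1 l hl] at hxy
              have hkl : k = l := by
                rcases Nat.lt_trichotomy k l with h | h | h
                · exact absurd hxy (hG'd _ _ h (le_of_lt hl))
                · exact h
                · exact absurd hxy.symm (hG'd _ _ h (le_of_lt hk))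
              rw [hkl]
            · rw [hB1 k hk, hB2 l hl] at hxy
              exact absurd hxy (hG'm k l hk hl)
            · have h5 : φ y ∈ Gset g' neg' P' i := (himg _).mpr ⟨y, hy1, rfl⟩
              rw [hB2 k hk, hB3 y hy1] at hxy
              rw [← hxy] at h5
              exact absurd h5 (hB5 k hk)
            · rw [hB2 k hk, hB1 l hl] at hxy
              exact absurd hxy.symm (hG'm l k hl hk)
            · rw [hB2 k hk, hB2 l hl] at hxy
              have hxy2 := neg_inj_adm g' neg' hneg' hfiber' hxy
              have hkl : k = l := by
                rcases Nat.lt_trichotomy k l with h | h | h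
                · exact absurd hxy2 (hG'd _ _ h (le_of_lt hl))
                · exact h
                · exact absurd hxy2.symm (hG'd _ _ h (le_of_lt hk))
              rw [hkl]
          · -- image
            intro y
            constructor
            · intro hy
              rcases (mem_gset_succ g' neg' P' hin y).mp hy with h | ⟨k, h | h⟩
              · obtain ⟨x, hx, rfl⟩ := (himg y).mp h
                exact ⟨x, gset_mono g neg P (Nat.le_succ i) hx, hB3 x hx⟩
              · rcases Nat.lt_or_ge k κ with hk | hk
                · exact ⟨g^[k] (P I),
                    (mem_gset_succ g neg P hin _).mpr (Or.inr (iter_mem_orbitBar g neg _ k)),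
                    (hB1 k hk).trans h.symm⟩
                · have hy' : y ∈ Gset g' neg' P' i := by rw [h]; exact hdec' k hk
                  obtain ⟨x, hx, rfl⟩ := (himg y).mp hy'
                  exact ⟨x, gset_mono g neg P (Nat.le_succ i) hx, hB3 x hx⟩
              · rcases Nat.lt_or_ge k κ with hk | hk
                · exact ⟨neg (g^[k] (P I)),
                    (mem_gset_succ g neg P hin _).mpr
                      (Or.inr (neg_iter_mem_orbitBar g neg _ k)),
                    (hB2 k hk).trans h.symm⟩
                · have hy' : y ∈ Gset g' neg' P' i := by
                    rw [h]
                    exact gset_neg_closed g' neg' P' hneg' hfiber' (hdec' k hk)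
                  obtain ⟨x, hx, rfl⟩ := (himg y).mp hy'
                  exact ⟨x, gset_mono g neg P (Nat.le_succ i) hx, hB3 x hx⟩
            · rintro ⟨x, hx, rfl⟩
              rcases hdec x hx with h | ⟨k, hk, rfl⟩ | ⟨k, hk, rfl⟩
              · rw [hB3 x h]
                exact gset_mono g' neg' P' (Nat.le_succ i) ((himg _).mpr ⟨x, h, rfl⟩)
              · rw [hB1 k hk]
                exact (mem_gset_succ g' neg' P' hin _).mpr
                  (Or.inr (iter_mem_orbitBar g' neg' _ k))
              · rw [hB2 k hk]
                exact (mem_gset_succ g' neg' P' hin _).mpr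
                  (Or.inr (neg_iter_mem_orbitBar g' neg' _ k))
          · -- g-commute
            intro x hx
            rcases hdec x hx with h | ⟨k, hk, rfl⟩ | ⟨k, hk, rfl⟩
            · rw [hB3 _ (gset_g_closed g neg P hneg h), hB3 _ h, hgc _ h]
            · rw [← Function.iterate_succ_apply' g k (P I), hB1 k hk,
                ← Function.iterate_succ_apply' g' k (P' I)]
              rcases Nat.lt_or_ge (k + 1) κ with h | h
              · exact hB1 (k + 1) h
              · have hk1 : k.succ = κ := by omega
                rw [hk1, hB3 _ hκmem, hQval]
            · rw [(hneg (g^[k] (P I))).2, ← Function.iterate_succ_apply' g k (P I),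
                hB2 k hk, (hneg' (g'^[k] (P' I))).2,
                ← Function.iterate_succ_apply' g' k (P' I)]
              rcases Nat.lt_or_ge (k + 1) κ with h | h
              · exact hB1 (k + 1) h
              · have hk1 : k.succ = κ := by omega
                rw [hk1, hB3 _ hκmem, hQval]
          · -- neg-commute
            intro x hx
            rcases hdec x hx with h | ⟨k, hk, rfl⟩ | ⟨k, hk, rfl⟩
            · rw [hB3 _ (gset_neg_closed g neg P hneg hfiber h), hB3 _ h, hnc _ h]
            · rw [hB2 k hk, hB1 k hk]
            · rw [neg_neg_eq g neg hneg hfiber, hB1 k hk, hB2 k hk,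
                neg_neg_eq g' neg' hneg' hfiber']
          · -- generators
            intro j hj
            rcases Nat.lt_or_ge (j : ℕ) i with h | h
            · rw [hB3 _ (orbitBar_subset_gset g neg P h (self_mem_orbitBar g neg (P j)))]
              exact hP j h
            · have hji : j = I := Fin.ext (by omega)
              rw [hji]
              simpa using hB1 0 hκpos
    obtain ⟨φ, hinj, himg, hgc, hnc, hP⟩ := key n (le_refl n)
    have hGuniv : ∀ x : V, x ∈ Gset g neg P n := by
      intro x
      obtain ⟨j, hj⟩ := hPgen x
      exact ⟨j, j.isLt, hj⟩
    have hG'univ : ∀ y : V', y ∈ Gset g' neg' P' n := by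
      intro y
      obtain ⟨j, hj⟩ := hP'gen y
      exact ⟨j, j.isLt, hj⟩
    refine ⟨φ, ⟨fun a b hab => hinj (hGuniv a) (hGuniv b) hab, fun y => ?_⟩,
      fun q => hgc q (hGuniv q), fun i => hP i i.isLt⟩
    obtain ⟨x, -, hx⟩ := (himg y).mp (hG'univ y)
    exact ⟨x, hx⟩
end
end
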